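/- arXiv:1803.09871 — 2 statements merged into one kernel-verified Lean document; each statement's English description precedes it below -/
import Mathlib

section
/- For every probability distribution π' on 𝕏, every fixed τ ≥ 1, and every D > 0: lim_{T→∞} [ (1/T) R^E_{X^T_{[π',P]}}(TD) − (1/T) R^E_{J_τ(X^T_{[π',P]})}(TD) ] = 0. -/
open Filter Finset

/-- `μ` is a probability distribution on the finite set `𝕏`. -/
def IsProbDist {𝕏 : Type} [Fintype 𝕏] (μ : 𝕏 → ℝ) : Prop :=
  (∀ x, 0 ≤ μ x) ∧ ∑ x, μ x = 1

/-- `P` is a stochastic (transition probability) matrix on `𝕏`. -/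
def IsStochastic {𝕏 : Type} [Fintype 𝕏] (P : 𝕏 → 𝕏 → ℝ) : Prop :=
  (∀ x y, 0 ≤ P x y) ∧ ∀ x, ∑ y, P x y = 1

/-- `n`-th power of the transition matrix `P`. -/
def matPow {𝕏 : Type} [Fintype 𝕏] [DecidableEq 𝕏] (P : 𝕏 → 𝕏 → ℝ) : ℕ → 𝕏 → 𝕏 → ℝ
  | 0 => fun x y => if x = y then 1 else 0
  | n + 1 => fun x y => ∑ z, matPow P n x z * P z y

/-- Irreducible and aperiodic chain on a finite state space, i.e. primitive transition matrix:
some power of `P` has all entries strictly positive. -/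
def IsIrreducibleAperiodic {𝕏 : Type} [Fintype 𝕏] [DecidableEq 𝕏] (P : 𝕏 → 𝕏 → ℝ) : Prop :=
  ∃ m : ℕ, 0 < m ∧ ∀ x y, 0 < matPow P m x y

/-- `π` is a stationary distribution of `P`. -/
def IsStationaryDist {𝕏 : Type} [Fintype 𝕏] (P : 𝕏 → 𝕏 → ℝ) (π : 𝕏 → ℝ) : Prop :=
  ∀ y, ∑ x, π x * P x y = π y

/-- Law of the first `n` states of the Markov chain with initial distribution `π'`
and transition matrix `P`. -/
def markovLaw {𝕏 : Type} (π' : 𝕏 → ℝ) (P : 𝕏 → 𝕏 → ℝ) : ∀ n : ℕ, (Fin n → 𝕏) → ℝ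
  | 0, _ => 1
  | n + 1, x => π' (x 0) * ∏ i : Fin n, P (x i.castSucc) (x i.succ)

/-- Distribution of `X_{n+1}` when `X_1 ~ μ` (i.e. `μ Pⁿ`). -/
def stepDist {𝕏 : Type} [Fintype 𝕏] [DecidableEq 𝕏] (μ : 𝕏 → ℝ) (P : 𝕏 → 𝕏 → ℝ)
    (n : ℕ) : 𝕏 → ℝ :=
  fun y => ∑ x, μ x * matPow P n x y

/-- Law of `n` i.i.d. blocks, each distributed according to `q`. -/
def iidLaw {S : Type} [Fintype S] (q : S → ℝ) (n : ℕ) (x : Fin n → S) : ℝ := ∏ i, q (x i)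

/-- Additive block distortion built from the single-letter distortion `d`. -/
def blockDist {𝕏 𝕐 : Type} (d : 𝕏 → 𝕐 → ℝ) (T : ℕ) (s : Fin T → 𝕏) (t : Fin T → 𝕐) : ℝ :=
  ∑ j, d (s j) (t j)

/-- Marginal of the distribution `q` on `𝕏^T` on the last `T - τ` coordinates
(the projection `J_τ`). -/
noncomputable def projDist {𝕏 : Type} [Fintype 𝕏] [DecidableEq 𝕏] {T : ℕ}
    (q : (Fin T → 𝕏) → ℝ) (τ : ℕ) : (Fin (T - τ) → 𝕏) → ℝ :=
  fun r => ∑ s : Fin T → 𝕏,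
    if (∀ i : Fin (T - τ), s ⟨τ + i.val, by have := i.isLt; omega⟩ = r i) then q s else 0

/-- Maximal value of the single-letter distortion measure. -/
noncomputable def Dmax {𝕏 𝕐 : Type} [Fintype 𝕏] [Fintype 𝕐] (d : 𝕏 → 𝕐 → ℝ) : ℝ :=
  ⨆ p : 𝕏 × 𝕐, d p.1 p.2

/-- Minimal strictly positive value of the single-letter distortion measure. -/
noncomputable def Dmin {𝕏 𝕐 : Type} [Fintype 𝕏] [Fintype 𝕐] (d : 𝕏 → 𝕐 → ℝ) : ℝ :=
  ⨅ p : {p : 𝕏 × 𝕐 // 0 < d p.1 p.2}, d p.1.1 p.1.2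

/-- Operational rate-distortion function under the expected distortion criterion, for the
source whose first `n` letters have law `law n` and with single-letter distortion `ρ`:
the infimum of all rates `R` for which there is a sequence of rate-`R` codes
`⟨eⁿ, fⁿ⟩` (with codebook size `2^⌊nR⌋`) whose expected normalized `n`-letter distortion
has `limsup` at most `D`. -/
noncomputable def RDE {S T : Type} [Fintype S]
    (law : ∀ n : ℕ, (Fin n → S) → ℝ) (ρ : S → T → ℝ) (D : ℝ) : ℝ :=
  sInf {R : ℝ |
    ∃ enc : ∀ n : ℕ, (Fin n → S) → Fin (2 ^ ⌊(n : ℝ) * R⌋₊),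
    ∃ dec : ∀ n : ℕ, Fin (2 ^ ⌊(n : ℝ) * R⌋₊) → (Fin n → T),
      Filter.limsup (fun n : ℕ =>
        ∑ x : Fin n → S, law n x * ((n : ℝ)⁻¹ *
          ∑ i, ρ (x i) (dec n (enc n x) i))) Filter.atTop ≤ D}

/-- Operational rate-distortion function of the Markov source `X_{[π',P]}`. -/
noncomputable def markovRDE {𝕏 : Type} [Fintype 𝕏]
    (π' : 𝕏 → ℝ) (P : 𝕏 → 𝕏 → ℝ) (d : 𝕏 → 𝕏 → ℝ) (D : ℝ) : ℝ :=
  RDE (markovLaw π' P) d D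

/-- Operational rate-distortion function of the block-independent approximation
(BIA) `X^T_{[π',P]}` source. -/
noncomputable def biaRDE {𝕏 : Type} [Fintype 𝕏]
    (π' : 𝕏 → ℝ) (P : 𝕏 → 𝕏 → ℝ) (d : 𝕏 → 𝕏 → ℝ) (T : ℕ) (Δ : ℝ) : ℝ :=
  RDE (iidLaw (markovLaw π' P T)) (blockDist d T) Δ

/-- Operational rate-distortion function of the vector i.i.d. `J_τ(X^T_{[π',P]})` source. -/
noncomputable def projRDE {𝕏 : Type} [Fintype 𝕏] [DecidableEq 𝕏]
    (π' : 𝕏 → ℝ) (P : 𝕏 → 𝕏 → ℝ) (d : 𝕏 → 𝕏 → ℝ) (T τ : ℕ) (Δ : ℝ) : ℝ :=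
  RDE (iidLaw (projDist (markovLaw π' P T) τ)) (blockDist d (T - τ)) Δ

/-- `δ^{(τ)}`: the `l¹` distance between the distribution of `X_{τ+1}` under `X_{[π',P]}`
and the stationary distribution `π`. -/
def l1dev {𝕏 : Type} [Fintype 𝕏] [DecidableEq 𝕏]
    (π' : 𝕏 → ℝ) (P : 𝕏 → 𝕏 → ℝ) (π : 𝕏 → ℝ) (τ : ℕ) : ℝ :=
  ∑ x, |stepDist π' P τ x - π x|

namespace BIAProof


variable {S T' : Type} [Fintype S]

def RDEset {S T : Type} [Fintype S] (law : ∀ n : ℕ, (Fin n → S) → ℝ) (ρ : S → T → ℝ)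
    (D : ℝ) : Set ℝ :=
  {R : ℝ |
    ∃ enc : ∀ n : ℕ, (Fin n → S) → Fin (2 ^ ⌊(n : ℝ) * R⌋₊),
    ∃ dec : ∀ n : ℕ, Fin (2 ^ ⌊(n : ℝ) * R⌋₊) → (Fin n → T),
      Filter.limsup (fun n : ℕ =>
        ∑ x : Fin n → S, law n x * ((n : ℝ)⁻¹ *
          ∑ i, ρ (x i) (dec n (enc n x) i))) Filter.atTop ≤ D}

lemma RDE_eq_sInf {law : ∀ n : ℕ, (Fin n → S) → ℝ} {ρ : S → T' → ℝ} {D : ℝ} :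
    RDE law ρ D = sInf (RDEset law ρ D) := rfl

variable {law : ∀ n : ℕ, (Fin n → S) → ℝ} {ρ : S → T' → ℝ} {D : ℝ}

lemma RDEset_upward {R R' : ℝ} (hRR' : R ≤ R') (h : R ∈ RDEset law ρ D) :
    R' ∈ RDEset law ρ D := by
  obtain ⟨enc, dec, h⟩ := h
  have hmul : ∀ n : ℕ, (n : ℝ) * R ≤ (n : ℝ) * R' := fun n =>
    mul_le_mul_of_nonneg_left hRR' (Nat.cast_nonneg n)
  have hn : ∀ n : ℕ, 2 ^ ⌊(n : ℝ) * R⌋₊ ≤ 2 ^ ⌊(n : ℝ) * R'⌋₊ := fun n =>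
    Nat.pow_le_pow_right (by norm_num) (Nat.floor_le_floor (hmul n))
  refine ⟨fun n x => Fin.castLE (hn n) (enc n x),
    fun n i => dec n (if hh : i.1 < 2 ^ ⌊(n : ℝ) * R⌋₊ then ⟨i.1, hh⟩
      else ⟨0, Nat.pow_pos (by norm_num)⟩), ?_⟩
  have heq : ∀ n : ℕ, ∀ x : Fin n → S,
      dec n (if hh : ((Fin.castLE (hn n) (enc n x)) : Fin _).1 < 2 ^ ⌊(n : ℝ) * R⌋₊
        then ⟨(Fin.castLE (hn n) (enc n x)).1, hh⟩
        else ⟨0, Nat.pow_pos (by norm_num)⟩) = dec n (enc n x) := by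
    intro n x
    rw [dif_pos (by simpa using (enc n x).2)]
    congr 1
  refine le_trans (le_of_eq ?_) h
  congr 1
  funext n
  exact Finset.sum_congr rfl fun x _ => by beta_reduce; rw [heq n x]

lemma neg_transport {R R' : ℝ} (hR : R ≤ 0) (hR' : R' ≤ 0) (h : R ∈ RDEset law ρ D) :
    R' ∈ RDEset law ρ D := by
  obtain ⟨enc, dec, h⟩ := h
  have hz : ∀ (c : ℝ) (n : ℕ), c ≤ 0 → ⌊(n : ℝ) * c⌋₊ = 0 := by
    intro c n hc
    apply Nat.floor_eq_zero.2
    have : (n : ℝ) * c ≤ 0 := mul_nonpos_of_nonneg_of_nonpos (Nat.cast_nonneg n) hc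
    linarith
  have hone : ∀ n : ℕ, (2 : ℕ) ^ ⌊(n : ℝ) * R⌋₊ = 1 := fun n => by rw [hz R n hR]; rfl
  have hone' : ∀ n : ℕ, (2 : ℕ) ^ ⌊(n : ℝ) * R'⌋₊ = 1 := fun n => by rw [hz R' n hR']; rfl
  refine ⟨fun n _ => ⟨0, by rw [hone' n]; norm_num⟩,
    fun n _ => dec n ⟨0, by rw [hone n]; norm_num⟩, ?_⟩
  have heq : ∀ (n : ℕ) (x : Fin n → S),
      enc n x = (⟨0, by rw [hone n]; norm_num⟩ : Fin (2 ^ ⌊(n : ℝ) * R⌋₊)) := by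
    intro n x
    apply Fin.ext
    have h2 : (enc n x).1 < 1 := lt_of_lt_of_eq (enc n x).2 (hone n)
    simpa using Nat.lt_one_iff.1 h2
  refine le_trans (le_of_eq ?_) h
  congr 1
  funext n
  refine Finset.sum_congr rfl fun x _ => ?_
  beta_reduce
  rw [heq n x]

lemma card_mem_RDEset {law : ∀ n : ℕ, (Fin n → S) → ℝ} {ρ : S → S → ℝ} {D : ℝ}
    [DecidableEq S] [Nonempty S] (hρ : ∀ s, ρ s s = 0) (hD : 0 ≤ D) :
    ((Fintype.card S : ℝ)) ∈ RDEset law ρ D := by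
  have hcard : ∀ n : ℕ, Fintype.card (Fin n → S) ≤ 2 ^ ⌊(n : ℝ) * (Fintype.card S : ℝ)⌋₊ := by
    intro n
    have h1 : ⌊(n : ℝ) * (Fintype.card S : ℝ)⌋₊ = n * Fintype.card S := by
      rw [← Nat.cast_mul, Nat.floor_natCast]
    rw [h1, Fintype.card_fun, Fintype.card_fin]
    calc Fintype.card S ^ n ≤ (2 ^ Fintype.card S) ^ n :=
          Nat.pow_le_pow_left Nat.lt_two_pow_self.le n
      _ = 2 ^ (n * Fintype.card S) := by rw [← pow_mul, Nat.mul_comm]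
  refine ⟨fun n x => Fin.castLE (hcard n) (Fintype.equivFin (Fin n → S) x),
    fun n i => (Fintype.equivFin (Fin n → S)).symm
      (if hh : i.1 < Fintype.card (Fin n → S) then ⟨i.1, hh⟩ else ⟨0, Fintype.card_pos⟩), ?_⟩
  have heq : ∀ (n : ℕ) (x : Fin n → S),
      (Fintype.equivFin (Fin n → S)).symm
        (if hh : (Fin.castLE (hcard n) (Fintype.equivFin (Fin n → S) x)).1 <
            Fintype.card (Fin n → S)
          then ⟨(Fin.castLE (hcard n) (Fintype.equivFin (Fin n → S) x)).1, hh⟩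
          else ⟨0, Fintype.card_pos⟩) = x := by
    intro n x
    rw [dif_pos (by simpa using (Fintype.equivFin (Fin n → S) x).2)]
    have : (⟨(Fin.castLE (hcard n) (Fintype.equivFin (Fin n → S) x)).1, by
        simpa using (Fintype.equivFin (Fin n → S) x).2⟩ : Fin (Fintype.card (Fin n → S))) =
        Fintype.equivFin (Fin n → S) x := Fin.ext rfl
    rw [this, Equiv.symm_apply_apply]
  have hzero : (fun n : ℕ => ∑ x : Fin n → S, law n x * ((n : ℝ)⁻¹ *
      ∑ i : Fin n, ρ (x i) (x i))) = fun _ => (0 : ℝ) := by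
    funext n
    refine Finset.sum_eq_zero fun x _ => ?_
    rw [Finset.sum_eq_zero fun i _ => hρ (x i)]
    ring
  refine le_trans (le_of_eq ?_) (le_trans (le_of_eq (Filter.limsup_const (f := (atTop : Filter ℕ)) (0 : ℝ))) hD)
  rw [← hzero]
  congr 1
  funext n
  refine Finset.sum_congr rfl fun x _ => ?_
  beta_reduce
  rw [heq n x]

lemma sInf_RDEset_nonneg : 0 ≤ sInf (RDEset law ρ D) := by
  by_cases hne : (RDEset law ρ D).Nonempty
  · by_cases hbdd : BddBelow (RDEset law ρ D)
    · apply Real.sInf_nonneg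
      intro R hR
      by_contra hneg
      push_neg at hneg
      obtain ⟨b, hb⟩ := hbdd
      have hmem : min (b - 1) 0 ∈ RDEset law ρ D :=
        neg_transport hneg.le (min_le_right _ _) hR
      have h1 := hb hmem
      have h2 : min (b - 1) 0 ≤ b - 1 := min_le_left _ _
      linarith
    · rw [Real.sInf_of_not_bddBelow hbdd]
  · rw [Set.not_nonempty_iff_eq_empty.1 hne, Real.sInf_empty]

lemma sInf_RDEset_le_of_mem {R : ℝ} (h : R ∈ RDEset law ρ D) (hR : 0 ≤ R) :
    sInf (RDEset law ρ D) ≤ R := by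
  by_cases hbdd : BddBelow (RDEset law ρ D)
  · exact csInf_le hbdd h
  · rw [Real.sInf_of_not_bddBelow hbdd]; exact hR

lemma exists_good_rate {law : ∀ n : ℕ, (Fin n → S) → ℝ} {ρ : S → S → ℝ} {D : ℝ}
    [DecidableEq S] [Nonempty S] (hρ : ∀ s, ρ s s = 0) (hD : 0 ≤ D) {ε : ℝ} (hε : 0 < ε) :
    ∃ R ∈ RDEset law ρ D, 0 ≤ R ∧ R ≤ sInf (RDEset law ρ D) + ε := by
  obtain ⟨R₁, hR₁, hlt⟩ := Real.lt_sInf_add_pos ⟨_, card_mem_RDEset hρ hD⟩ hε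
  refine ⟨max R₁ 0, RDEset_upward (le_max_left _ _) hR₁, le_max_right _ _, ?_⟩
  have h0 : (0:ℝ) ≤ sInf (RDEset law ρ D) := sInf_RDEset_nonneg
  exact max_le hlt.le (by linarith)



lemma sum_split {N k : ℕ} (hk : k ≤ N) (f : Fin N → ℝ) :
    ∑ j, f j = (∑ j : Fin k, f ⟨j.1, lt_of_lt_of_le j.2 hk⟩)
      + ∑ j : Fin (N - k), f ⟨k + j.1, by omega⟩ := by
  have h : k + (N - k) = N := by omega
  rw [← Equiv.sum_comp (finCongr h) f, Fin.sum_univ_add]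
  refine congrArg₂ (· + ·) ?_ ?_ <;>
    exact Finset.sum_congr rfl fun j _ => congrArg f (Fin.ext (by simp))

lemma prod_ite_all {ι : Type} [Fintype ι] (c : ι → Prop) [DecidablePred c] [Decidable (∀ i, c i)] (a : ι → ℝ) :
    ∏ i, (if c i then a i else 0) = if ∀ i, c i then ∏ i, a i else 0 := by
  by_cases h : ∀ i, c i
  · rw [if_pos h]; exact Finset.prod_congr rfl fun i _ => if_pos (h i)
  · rw [if_neg h]; push_neg at h; obtain ⟨i₀, hi⟩ := h
    exact Finset.prod_eq_zero (Finset.mem_univ i₀) (if_neg hi)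

lemma iidLaw_nonneg {S : Type} [Fintype S] {q : S → ℝ} (hq : ∀ s, 0 ≤ q s) (n : ℕ)
    (x : Fin n → S) : 0 ≤ iidLaw q n x :=
  Finset.prod_nonneg fun i _ => hq (x i)

lemma sum_iidLaw_one {S : Type} [Fintype S] {q : S → ℝ} (hq : ∑ s, q s = 1) (n : ℕ) :
    ∑ x : Fin n → S, iidLaw q n x = 1 := by
  unfold iidLaw
  rw [← Fintype.piFinset_univ, ← Finset.prod_univ_sum]
  simp [hq]

lemma iid_pushforward {S S' : Type} [Fintype S] [Fintype S'] [DecidableEq S']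
    (q : S → ℝ) (φ : S → S') (n : ℕ) (f : (Fin n → S') → ℝ) :
    ∑ r : Fin n → S', iidLaw (fun r' => ∑ s, if φ s = r' then q s else 0) n r * f r
      = ∑ s : Fin n → S, iidLaw q n s * f (φ ∘ s) := by
  have hmarg : ∀ r : Fin n → S', iidLaw (fun r' => ∑ s, if φ s = r' then q s else 0) n r
      = ∑ s : Fin n → S, if φ ∘ s = r then iidLaw q n s else 0 := by
    intro r
    unfold iidLaw
    beta_reduce
    rw [Finset.prod_univ_sum, Fintype.piFinset_univ]
    refine Finset.sum_congr rfl fun p _ => ?_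
    rw [prod_ite_all]
    exact if_congr (funext_iff (f := φ ∘ p) (g := r)).symm rfl rfl
  calc ∑ r : Fin n → S', iidLaw (fun r' => ∑ s, if φ s = r' then q s else 0) n r * f r
      = ∑ r : Fin n → S', ∑ s : Fin n → S,
          (if φ ∘ s = r then iidLaw q n s else 0) * f r := by
        refine Finset.sum_congr rfl fun r _ => ?_
        rw [hmarg r, Finset.sum_mul]
    _ = ∑ s : Fin n → S, ∑ r : Fin n → S',
          (if φ ∘ s = r then iidLaw q n s * f r else 0) := by
        rw [Finset.sum_comm]
        exact Finset.sum_congr rfl fun s _ => Finset.sum_congr rfl fun r _ => by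
          rw [ite_mul, zero_mul]
    _ = ∑ s : Fin n → S, iidLaw q n s * f (φ ∘ s) := by
        refine Finset.sum_congr rfl fun s _ => ?_
        rw [Finset.sum_ite_eq Finset.univ (φ ∘ s) (fun r => iidLaw q n s * f r),
          if_pos (Finset.mem_univ _)]

lemma iid_marginal {S : Type} [Fintype S] (q : S → ℝ) (hq : ∑ s, q s = 1)
    (k m : ℕ) (F : (Fin m → S) → ℝ) :
    ∑ s : Fin (k + m) → S, iidLaw q (k + m) s * F (fun j => s ⟨k + j.1, by omega⟩)
      = ∑ t : Fin m → S, iidLaw q m t * F t := by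
  classical
  set e : ((Fin k → S) × (Fin m → S)) ≃ (Fin (k + m) → S) :=
    (Equiv.sumArrowEquivProdArrow _ _ S).symm.trans
      (Equiv.arrowCongr finSumFinEquiv (Equiv.refl S)) with he
  have happ : ∀ (a : Fin k → S) (b : Fin m → S) (i : Fin (k + m)),
      e (a, b) i = Sum.elim a b (finSumFinEquiv.symm i) := by
    intro a b i
    simp [he, Equiv.sumArrowEquivProdArrow, Equiv.arrowCongr]
  have key : ∀ p : (Fin k → S) × (Fin m → S),
      iidLaw q (k + m) (e p) * F (fun j => e p ⟨k + j.1, by omega⟩)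
        = (iidLaw q k p.1 * iidLaw q m p.2) * F p.2 := by
    rintro ⟨a, b⟩
    have h1 : iidLaw q (k + m) (e (a, b)) = iidLaw q k a * iidLaw q m b := by
      unfold iidLaw
      have h2 : ∀ i : Fin (k + m), q (e (a, b) i) = (fun z => q (Sum.elim a b z))
          (finSumFinEquiv.symm i) := fun i => by rw [happ]
      calc ∏ i, q (e (a, b) i)
          = ∏ i, (fun z => q (Sum.elim a b z)) (finSumFinEquiv.symm i) :=
            Finset.prod_congr rfl fun i _ => h2 i
        _ = ∏ z : Fin k ⊕ Fin m, q (Sum.elim a b z) :=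
            Equiv.prod_comp (finSumFinEquiv (m := k) (n := m)).symm
              (fun z => q (Sum.elim a b z))
        _ = (∏ i, q (a i)) * ∏ i, q (b i) := by rw [Fintype.prod_sum_type]; simp
    have h3 : (fun j : Fin m => e (a, b) ⟨k + j.1, by omega⟩) = b := by
      funext j
      have h4 : (⟨k + j.1, by omega⟩ : Fin (k + m)) = Fin.natAdd k j := Fin.ext rfl
      rw [happ, h4, finSumFinEquiv_symm_apply_natAdd]
      rfl
    rw [h1, h3]
  calc ∑ s : Fin (k + m) → S, iidLaw q (k + m) s * F (fun j => s ⟨k + j.1, by omega⟩)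
      = ∑ p : (Fin k → S) × (Fin m → S),
          iidLaw q (k + m) (e p) * F (fun j => e p ⟨k + j.1, by omega⟩) :=
        (Equiv.sum_comp e _).symm
    _ = ∑ p : (Fin k → S) × (Fin m → S), (iidLaw q k p.1 * iidLaw q m p.2) * F p.2 :=
        Finset.sum_congr rfl fun p _ => key p
    _ = ∑ a : Fin k → S, ∑ b : Fin m → S, iidLaw q k a * (iidLaw q m b * F b) := by
        rw [Fintype.sum_prod_type]
        exact Finset.sum_congr rfl fun a _ => Finset.sum_congr rfl fun b _ => by ring
    _ = ∑ t : Fin m → S, iidLaw q m t * F t := by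
        rw [← Finset.sum_mul_sum]
        rw [sum_iidLaw_one hq, one_mul]

lemma iid_marginal' {S : Type} [Fintype S] (q : S → ℝ) (hq : ∑ s, q s = 1)
    {n k : ℕ} (hk : k ≤ n) (F : (Fin (n - k) → S) → ℝ) :
    ∑ s : Fin n → S, iidLaw q n s * F (fun j => s ⟨k + j.1, by omega⟩)
      = ∑ t : Fin (n - k) → S, iidLaw q (n - k) t * F t := by
  have h : k + (n - k) = n := by omega
  rw [← iid_marginal q hq k (n - k) F]
  refine Fintype.sum_equiv (Equiv.arrowCongr (finCongr h.symm) (Equiv.refl S)) _ _ fun s => ?_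
  have h1 : ∀ i : Fin (k + (n - k)),
      (Equiv.arrowCongr (finCongr h.symm) (Equiv.refl S) s) i = s (finCongr h i) := by
    intro i; simp [Equiv.arrowCongr]
  have h2 : iidLaw q n s = iidLaw q (k + (n - k))
      (Equiv.arrowCongr (finCongr h.symm) (Equiv.refl S) s) := by
    unfold iidLaw
    calc ∏ i : Fin n, q (s i) = ∏ i : Fin (k + (n - k)), q (s (finCongr h i)) :=
          (Equiv.prod_comp (finCongr h) (fun i => q (s i))).symm
      _ = _ := Finset.prod_congr rfl fun i _ => by rw [h1]
  rw [h2]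
  congr 1



variable {𝕏 : Type} [Fintype 𝕏] [DecidableEq 𝕏]

def Jmap (τ : ℕ) {T : ℕ} (s : Fin T → 𝕏) : Fin (T - τ) → 𝕏 :=
  fun i => s ⟨τ + i.1, by omega⟩

lemma projDist_eq {T : ℕ} (q : (Fin T → 𝕏) → ℝ) (τ : ℕ) :
    projDist q τ = fun r => ∑ s : Fin T → 𝕏, if Jmap τ s = r then q s else 0 := by
  funext r
  refine Finset.sum_congr rfl fun s _ => if_congr ?_ rfl rfl
  exact (funext_iff (f := Jmap τ s) (g := r)).symm

lemma markovLaw_nonneg {π' : 𝕏 → ℝ} {P : 𝕏 → 𝕏 → ℝ} (hπ' : ∀ x, 0 ≤ π' x)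
    (hP : ∀ x y, 0 ≤ P x y) (T : ℕ) (x : Fin T → 𝕏) : 0 ≤ markovLaw π' P T x := by
  cases T with
  | zero => simp [markovLaw]
  | succ n => exact mul_nonneg (hπ' _) (Finset.prod_nonneg fun i _ => hP _ _)

lemma markovLaw_succ (μ : 𝕏 → ℝ) (P : 𝕏 → 𝕏 → ℝ) (n : ℕ) (x : Fin (n + 1) → 𝕏) :
    markovLaw μ P (n + 1) x
      = μ (x 0) * markovLaw (fun z => P (x 0) z) P n (fun i => x i.succ) := by
  cases n with
  | zero => simp [markovLaw]
  | succ m =>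
    show μ (x 0) * ∏ i : Fin (m + 1), P (x i.castSucc) (x i.succ)
      = μ (x 0) * (P (x 0) (x (Fin.succ 0))
        * ∏ i : Fin m, P (x (Fin.castSucc i).succ) (x (Fin.succ i).succ))
    rw [Fin.prod_univ_succ]
    refine congrArg _ (congrArg₂ (· * ·) ?_ (Finset.prod_congr rfl fun i _ => ?_))
    · exact congrArg₂ P (congrArg x (by simp)) rfl
    · rw [Fin.succ_castSucc]

lemma sum_markovLaw {P : 𝕏 → 𝕏 → ℝ} (hP : IsStochastic P) :
    ∀ (n : ℕ) (μ : 𝕏 → ℝ), (∑ x, μ x = 1) → ∑ x : Fin n → 𝕏, markovLaw μ P n x = 1 := by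
  intro n
  induction n with
  | zero =>
    intro μ hμ
    simp [markovLaw]
  | succ m ih =>
    intro μ hμ
    calc ∑ x : Fin (m + 1) → 𝕏, markovLaw μ P (m + 1) x
        = ∑ x : Fin (m + 1) → 𝕏,
            μ (x 0) * markovLaw (fun z => P (x 0) z) P m (fun i => x i.succ) :=
          Finset.sum_congr rfl fun x _ => markovLaw_succ μ P m x
      _ = ∑ p : 𝕏 × (Fin m → 𝕏), μ p.1 * markovLaw (fun z => P p.1 z) P m p.2 := by
          refine Fintype.sum_equiv ((Fin.consEquiv (fun _ => 𝕏)).symm) _ _ fun x => ?_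
          rfl
      _ = ∑ a : 𝕏, μ a * ∑ y : Fin m → 𝕏, markovLaw (fun z => P a z) P m y := by
          rw [Fintype.sum_prod_type]
          exact Finset.sum_congr rfl fun a _ => by rw [Finset.mul_sum]
      _ = ∑ a : 𝕏, μ a * 1 :=
          Finset.sum_congr rfl fun a _ => by rw [ih _ (hP.2 a)]
      _ = 1 := by simpa using hμ


lemma isBU_le {e : ℕ → ℝ} {b : ℝ} (h : ∀ n, e n ≤ b) :
    Filter.IsBoundedUnder (· ≤ ·) Filter.atTop e :=
  ⟨b, Filter.eventually_map.2 (Filter.Eventually.of_forall h)⟩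

lemma distortion_nonneg {S T' : Type} [Fintype S] {law : ∀ n : ℕ, (Fin n → S) → ℝ}
    (hnn : ∀ n x, 0 ≤ law n x) {ρ : S → T' → ℝ} (hρ0 : ∀ s t, 0 ≤ ρ s t)
    (y : ∀ n : ℕ, (Fin n → S) → Fin n → T') (n : ℕ) :
    0 ≤ ∑ x : Fin n → S, law n x * ((n : ℝ)⁻¹ * ∑ i, ρ (x i) (y n x i)) :=
  Finset.sum_nonneg fun x _ => mul_nonneg (hnn n x)
    (mul_nonneg (by positivity) (Finset.sum_nonneg fun i _ => hρ0 _ _))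

lemma distortion_le {S T' : Type} [Fintype S] {law : ∀ n : ℕ, (Fin n → S) → ℝ}
    (hnn : ∀ n x, 0 ≤ law n x) (hsum : ∀ n, ∑ x : Fin n → S, law n x = 1)
    {ρ : S → T' → ℝ} {B : ℝ} (hB : 0 ≤ B) (hρ : ∀ s t, ρ s t ≤ B)
    (hρ0 : ∀ s t, 0 ≤ ρ s t)
    (y : ∀ n : ℕ, (Fin n → S) → Fin n → T') (n : ℕ) :
    ∑ x : Fin n → S, law n x * ((n : ℝ)⁻¹ * ∑ i, ρ (x i) (y n x i)) ≤ B := by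
  have key : ∀ x : Fin n → S, (n : ℝ)⁻¹ * ∑ i, ρ (x i) (y n x i) ≤ B := by
    intro x
    rcases Nat.eq_zero_or_pos n with h0 | hpos
    · subst h0; simpa using hB
    · have h1 : ∑ i, ρ (x i) (y n x i) ≤ (n : ℝ) * B := by
        calc ∑ i, ρ (x i) (y n x i) ≤ ∑ _i : Fin n, B :=
              Finset.sum_le_sum fun i _ => hρ _ _
          _ = (n : ℝ) * B := by rw [Finset.sum_const]; simp [mul_comm]
      have h2 : (0:ℝ) < (n : ℝ) := by exact_mod_cast hpos
      rw [inv_mul_le_iff₀ h2]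
      calc ∑ i, ρ (x i) (y n x i) ≤ (n : ℝ) * B := h1
        _ = (n:ℝ) * B := rfl
  calc ∑ x : Fin n → S, law n x * ((n : ℝ)⁻¹ * ∑ i, ρ (x i) (y n x i))
      ≤ ∑ x : Fin n → S, law n x * B :=
        Finset.sum_le_sum fun x _ => mul_le_mul_of_nonneg_left (key x) (hnn n x)
    _ = B := by rw [← Finset.sum_mul, hsum n, one_mul]

section LemmaA

variable {𝕏 : Type} [Fintype 𝕏] [DecidableEq 𝕏] [Nonempty 𝕏]
  {d : 𝕏 → 𝕏 → ℝ} {π' : 𝕏 → ℝ} {P : 𝕏 → 𝕏 → ℝ}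

lemma blockDist_nonneg (hdnn : ∀ x y, 0 ≤ d x y) {T : ℕ} (s t : Fin T → 𝕏) :
    0 ≤ blockDist d T s t :=
  Finset.sum_nonneg fun j _ => hdnn _ _

lemma blockDist_tail_le (hdnn : ∀ x y, 0 ≤ d x y) {T τ : ℕ} (hτT : τ ≤ T)
    (p t : Fin T → 𝕏) :
    blockDist d (T - τ) (Jmap τ p) (Jmap τ t) ≤ blockDist d T p t := by
  unfold blockDist
  rw [sum_split hτT (fun j => d (p j) (t j))]
  have h1 : ∑ j : Fin (T - τ), d (Jmap τ p j) (Jmap τ t j)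
      = ∑ j : Fin (T - τ), d (p ⟨τ + j.1, by omega⟩) (t ⟨τ + j.1, by omega⟩) := rfl
  rw [h1]
  have h2 : 0 ≤ ∑ j : Fin τ, d (p ⟨j.1, lt_of_lt_of_le j.2 hτT⟩) (t ⟨j.1, lt_of_lt_of_le j.2 hτT⟩) :=
    Finset.sum_nonneg fun j _ => hdnn _ _
  linarith

lemma dist_le_M (hdnn : ∀ x y, 0 ≤ d x y) (x y : 𝕏) : d x y ≤ ∑ x', ∑ y', d x' y' := by
  calc d x y ≤ ∑ y', d x y' := Finset.single_le_sum (fun y' _ => hdnn x y') (Finset.mem_univ y)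
    _ ≤ ∑ x', ∑ y', d x' y' :=
      Finset.single_le_sum (fun x' _ => Finset.sum_nonneg fun y' _ => hdnn x' y')
        (Finset.mem_univ x)

lemma blockDist_le (hdnn : ∀ x y, 0 ≤ d x y) {T : ℕ} (s t : Fin T → 𝕏) :
    blockDist d T s t ≤ (T : ℝ) * ∑ x', ∑ y', d x' y' := by
  calc blockDist d T s t ≤ ∑ _j : Fin T, ∑ x', ∑ y', d x' y' :=
        Finset.sum_le_sum fun j _ => dist_le_M hdnn _ _
    _ = (T : ℝ) * ∑ x', ∑ y', d x' y' := by rw [Finset.sum_const]; simp [mul_comm]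

lemma projDist_nonneg {T : ℕ} {q : (Fin T → 𝕏) → ℝ} (hq0 : ∀ s, 0 ≤ q s) (τ : ℕ)
    (r : Fin (T - τ) → 𝕏) : 0 ≤ projDist q τ r := by
  unfold projDist
  refine Finset.sum_nonneg fun s _ => ?_
  split
  · exact hq0 s
  · exact le_rfl

lemma lemmaA (hdnn : ∀ x y, 0 ≤ d x y)
    (hπ'0 : ∀ x, 0 ≤ π' x) (hπ'1 : ∑ x, π' x = 1) (hPst : IsStochastic P)
    {T τ : ℕ} (hτT : τ ≤ T) {Δ : ℝ} {R : ℝ}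
    (hR : R ∈ RDEset (iidLaw (markovLaw π' P T)) (blockDist d T) Δ) :
    R ∈ RDEset (iidLaw (projDist (markovLaw π' P T) τ)) (blockDist d (T - τ)) Δ := by
  classical
  obtain ⟨enc, dec, hlim⟩ := hR
  set q : (Fin T → 𝕏) → ℝ := markovLaw π' P T with hq
  have hq0 : ∀ s, 0 ≤ q s := markovLaw_nonneg hπ'0 hPst.1 T
  -- the distortion of a filled reconstruction
  set F : ∀ n : ℕ, (Fin n → (Fin (T - τ) → 𝕏)) → (Fin n → (Fin T → 𝕏)) → ℝ :=
    fun n r s => ∑ i, blockDist d (T - τ) (r i) (Jmap τ (dec n (enc n s) i)) with hF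
  have hmin : ∀ n r, ∃ s₀ : Fin n → (Fin T → 𝕏), ∀ s, F n r s₀ ≤ F n r s := by
    intro n r
    obtain ⟨s₀, _, hs₀⟩ := Finset.exists_min_image Finset.univ (F n r) ⟨Classical.arbitrary _,
      Finset.mem_univ _⟩
    exact ⟨s₀, fun s => hs₀ s (Finset.mem_univ s)⟩
  choose fill hfill using hmin
  refine ⟨fun n r => enc n (fill n r), fun n j i => Jmap τ (dec n j i), ?_⟩
  have key : ∀ n : ℕ,
      ∑ r : Fin n → (Fin (T - τ) → 𝕏), iidLaw (projDist q τ) n r *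
        ((n : ℝ)⁻¹ * ∑ i, blockDist d (T - τ) (r i) (Jmap τ (dec n (enc n (fill n r)) i)))
      ≤ ∑ s : Fin n → (Fin T → 𝕏), iidLaw q n s *
        ((n : ℝ)⁻¹ * ∑ i, blockDist d T (s i) (dec n (enc n s) i)) := by
    intro n
    have hpush : ∑ r : Fin n → (Fin (T - τ) → 𝕏), iidLaw (projDist q τ) n r *
        ((n : ℝ)⁻¹ * F n r (fill n r))
        = ∑ s : Fin n → (Fin T → 𝕏), iidLaw q n s *
          ((n : ℝ)⁻¹ * F n (Jmap τ ∘ s) (fill n (Jmap τ ∘ s))) := by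
      rw [projDist_eq q τ]
      exact iid_pushforward q (Jmap τ) n (fun r => (n : ℝ)⁻¹ * F n r (fill n r))
    calc ∑ r : Fin n → (Fin (T - τ) → 𝕏), iidLaw (projDist q τ) n r *
        ((n : ℝ)⁻¹ * ∑ i, blockDist d (T - τ) (r i) (Jmap τ (dec n (enc n (fill n r)) i)))
        = ∑ s : Fin n → (Fin T → 𝕏), iidLaw q n s *
          ((n : ℝ)⁻¹ * F n (Jmap τ ∘ s) (fill n (Jmap τ ∘ s))) := hpush
      _ ≤ ∑ s : Fin n → (Fin T → 𝕏), iidLaw q n s *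
          ((n : ℝ)⁻¹ * ∑ i, blockDist d T (s i) (dec n (enc n s) i)) := by
          refine Finset.sum_le_sum fun s _ => mul_le_mul_of_nonneg_left ?_
            (iidLaw_nonneg hq0 n s)
          refine mul_le_mul_of_nonneg_left ?_ (by positivity)
          calc F n (Jmap τ ∘ s) (fill n (Jmap τ ∘ s)) ≤ F n (Jmap τ ∘ s) s :=
                hfill n (Jmap τ ∘ s) s
            _ = ∑ i, blockDist d (T - τ) (Jmap τ (s i)) (Jmap τ (dec n (enc n s) i)) := rfl
            _ ≤ ∑ i, blockDist d T (s i) (dec n (enc n s) i) :=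
                Finset.sum_le_sum fun i _ => blockDist_tail_le hdnn hτT _ _
  have hnn' : ∀ n (x : Fin n → (Fin (T - τ) → 𝕏)), 0 ≤ iidLaw (projDist q τ) n x :=
    fun n x => iidLaw_nonneg (projDist_nonneg hq0 τ) n x
  have hnnq : ∀ n (x : Fin n → (Fin T → 𝕏)), 0 ≤ iidLaw q n x :=
    fun n x => iidLaw_nonneg hq0 n x
  have hsum1 : ∀ n, ∑ s : Fin n → (Fin T → 𝕏), iidLaw q n s = 1 :=
    fun n => sum_iidLaw_one (sum_markovLaw hPst T π' hπ'1) n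
  have hM0 : 0 ≤ (T : ℝ) * ∑ x', ∑ y', d x' y' :=
    mul_nonneg (Nat.cast_nonneg T)
      (Finset.sum_nonneg fun x' _ => Finset.sum_nonneg fun y' _ => hdnn x' y')
  refine le_trans (Filter.limsup_le_limsup (Filter.Eventually.of_forall key) ?_ ?_) hlim
  · exact Filter.isCoboundedUnder_le_of_le Filter.atTop fun n =>
      distortion_nonneg hnn' (fun s t => blockDist_nonneg hdnn s t)
        (fun n r i => Jmap τ (dec n (enc n (fill n r)) i)) n
  · exact isBU_le fun n =>
      distortion_le hnnq hsum1 hM0 (fun s t => blockDist_le hdnn s t)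
        (fun s t => blockDist_nonneg hdnn s t) (fun n s => dec n (enc n s)) n

end LemmaA

section LemmaB

variable {𝕏 : Type} [Fintype 𝕏] [DecidableEq 𝕏] [Nonempty 𝕏]
  {d : 𝕏 → 𝕏 → ℝ} {π' : 𝕏 → ℝ} {P : 𝕏 → 𝕏 → ℝ}

noncomputable def kfun (θ : ℝ) (n : ℕ) : ℕ := min ⌈θ * n⌉₊ n

noncomputable def mfun (θ : ℝ) (n : ℕ) : ℕ := n - kfun θ n

lemma kfun_le (θ : ℝ) (n : ℕ) : kfun θ n ≤ n := min_le_right _ _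

lemma kfun_add_mfun (θ : ℝ) (n : ℕ) : kfun θ n + mfun θ n = n := by
  have := kfun_le θ n; unfold mfun; omega

def recomb (x₀ : 𝕏) {T : ℕ} (τ : ℕ) (w : Fin (T - τ) → 𝕏) : Fin T → 𝕏 :=
  fun jj => if h : jj.1 < τ then x₀ else w ⟨jj.1 - τ, by have := jj.2; omega⟩

noncomputable def Jb (τ : ℕ) {T : ℕ} (θ : ℝ) (n : ℕ) (s : Fin n → (Fin T → 𝕏)) :
    Fin (mfun θ n) → (Fin (T - τ) → 𝕏) :=
  fun j => Jmap τ (s ⟨kfun θ n + j.1, by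
    have := j.2; unfold mfun at this; omega⟩)

lemma sum_projDist {T : ℕ} {q : (Fin T → 𝕏) → ℝ} (hq1 : ∑ s, q s = 1) (τ : ℕ) :
    ∑ r : Fin (T - τ) → 𝕏, projDist q τ r = 1 := by
  rw [projDist_eq, ← hq1, Finset.sum_comm]
  refine Finset.sum_congr rfl fun s _ => ?_
  rw [Finset.sum_ite_eq Finset.univ (Jmap τ s) (fun _ => q s), if_pos (Finset.mem_univ _)]

lemma blockDist_recomb_le (hdnn : ∀ x y, 0 ≤ d x y) {T τ : ℕ} (hτT : τ ≤ T) (x₀ : 𝕏)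
    (p : Fin T → 𝕏) (w : Fin (T - τ) → 𝕏) :
    blockDist d T p (recomb x₀ τ w)
      ≤ (τ : ℝ) * (∑ x', ∑ y', d x' y') + blockDist d (T - τ) (Jmap τ p) w := by
  unfold blockDist
  rw [sum_split hτT (fun j => d (p j) (recomb x₀ τ w j))]
  have hhead : ∑ j : Fin τ, d (p ⟨j.1, lt_of_lt_of_le j.2 hτT⟩)
      (recomb x₀ τ w ⟨j.1, lt_of_lt_of_le j.2 hτT⟩) ≤ (τ : ℝ) * (∑ x', ∑ y', d x' y') := by
    refine le_trans (Finset.sum_le_sum fun j _ => dist_le_M hdnn _ _) ?_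
    rw [Finset.sum_const]
    exact le_of_eq (by simp [mul_comm])
  have htail : ∑ j : Fin (T - τ), d (p ⟨τ + j.1, by omega⟩)
      (recomb x₀ τ w ⟨τ + j.1, by omega⟩) = ∑ j : Fin (T - τ), d (Jmap τ p j) (w j) := by
    refine Finset.sum_congr rfl fun j _ => ?_
    have h1 : recomb x₀ τ w ⟨τ + j.1, by omega⟩ = w j := by
      unfold recomb
      have hcond : ¬ (τ + j.1 < τ) := by omega
      rw [dif_neg hcond]
      exact congrArg w (Fin.ext (by simp))
    rw [h1]
    rfl
  rw [htail]
  linarith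

lemma blockDist_self (hdiag : ∀ x, d x x = 0) {T : ℕ} (s : Fin T → 𝕏) :
    blockDist d T s s = 0 :=
  Finset.sum_eq_zero fun j _ => hdiag _

lemma inner_bound (hdnn : ∀ x y, 0 ≤ d x y) (hdiag : ∀ x, d x x = 0)
    {T τ : ℕ} (hτT : τ ≤ T) (x₀ : 𝕏) (θ : ℝ) {R : ℝ}
    (enc : ∀ mm : ℕ, (Fin mm → (Fin (T - τ) → 𝕏)) → Fin (2 ^ ⌊(mm : ℝ) * R⌋₊))
    (dec : ∀ mm : ℕ, Fin (2 ^ ⌊(mm : ℝ) * R⌋₊) → (Fin mm → (Fin (T - τ) → 𝕏)))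
    (n : ℕ) (s : Fin n → (Fin T → 𝕏)) :
    ∑ i : Fin n, blockDist d T (s i)
      (if hi : i.1 < kfun θ n then s i
       else recomb x₀ τ (dec (mfun θ n) (enc (mfun θ n) (Jb τ θ n s))
         ⟨i.1 - kfun θ n, by have := kfun_le θ n; unfold mfun; omega⟩))
    ≤ (mfun θ n : ℝ) * ((τ : ℝ) * (∑ x', ∑ y', d x' y'))
      + ∑ j : Fin (mfun θ n), blockDist d (T - τ) (Jb τ θ n s j)
          (dec (mfun θ n) (enc (mfun θ n) (Jb τ θ n s)) j) := by
  rw [sum_split (kfun_le θ n)]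
  have hhead : ∑ j : Fin (kfun θ n), blockDist d T (s ⟨j.1, lt_of_lt_of_le j.2 (kfun_le θ n)⟩)
      (if hi : (⟨j.1, lt_of_lt_of_le j.2 (kfun_le θ n)⟩ : Fin n).1 < kfun θ n
        then s ⟨j.1, lt_of_lt_of_le j.2 (kfun_le θ n)⟩
        else recomb x₀ τ (dec (mfun θ n) (enc (mfun θ n) (Jb τ θ n s))
          ⟨(⟨j.1, lt_of_lt_of_le j.2 (kfun_le θ n)⟩ : Fin n).1 - kfun θ n,
            by have := kfun_le θ n; unfold mfun; omega⟩)) = 0 := by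
    refine Finset.sum_eq_zero fun j _ => ?_
    rw [dif_pos (show ((⟨j.1, lt_of_lt_of_le j.2 (kfun_le θ n)⟩ : Fin n)).1 < kfun θ n
      from j.2)]
    exact blockDist_self hdiag _
  have hlt : ∀ j : Fin (mfun θ n), kfun θ n + j.1 < n := fun j => by
    have := kfun_add_mfun θ n; omega
  have hlt2 : ∀ j : Fin (mfun θ n), kfun θ n + j.1 - kfun θ n < mfun θ n := fun j => by omega
  have htail : ∀ j : Fin (mfun θ n),
      blockDist d T (s ⟨kfun θ n + j.1, hlt j⟩)
        (if _hi : kfun θ n + j.1 < kfun θ n then s ⟨kfun θ n + j.1, hlt j⟩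
          else recomb x₀ τ (dec (mfun θ n) (enc (mfun θ n) (Jb τ θ n s))
            ⟨kfun θ n + j.1 - kfun θ n, hlt2 j⟩))
      ≤ (τ : ℝ) * (∑ x', ∑ y', d x' y')
        + blockDist d (T - τ) (Jb τ θ n s j)
            (dec (mfun θ n) (enc (mfun θ n) (Jb τ θ n s)) j) := by
    intro j
    rw [dif_neg (by omega)]
    have hidx : (⟨kfun θ n + j.1 - kfun θ n, hlt2 j⟩ : Fin (mfun θ n)) = j :=
      Fin.ext (by simp)
    rw [hidx]
    exact blockDist_recomb_le hdnn hτT x₀ _ _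
  calc _ ≤ (0 : ℝ) + ∑ j : Fin (mfun θ n), ((τ : ℝ) * (∑ x', ∑ y', d x' y')
      + blockDist d (T - τ) (Jb τ θ n s j)
          (dec (mfun θ n) (enc (mfun θ n) (Jb τ θ n s)) j)) := by
        rw [hhead]
        exact add_le_add le_rfl (Finset.sum_le_sum fun j _ => htail j)
    _ = (mfun θ n : ℝ) * ((τ : ℝ) * (∑ x', ∑ y', d x' y'))
      + ∑ j : Fin (mfun θ n), blockDist d (T - τ) (Jb τ θ n s j)
          (dec (mfun θ n) (enc (mfun θ n) (Jb τ θ n s)) j) := by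
        rw [zero_add, Finset.sum_add_distrib, Finset.sum_const]
        simp [mul_comm]

lemma exp_bound (hdnn : ∀ x y, 0 ≤ d x y) (hdiag : ∀ x, d x x = 0)
    {T τ : ℕ} (hτT : τ ≤ T)
    (hπ'0 : ∀ x, 0 ≤ π' x) (hπ'1 : ∑ x, π' x = 1) (hPst : IsStochastic P)
    (x₀ : 𝕏) (θ : ℝ) {R : ℝ}
    (enc : ∀ mm : ℕ, (Fin mm → (Fin (T - τ) → 𝕏)) → Fin (2 ^ ⌊(mm : ℝ) * R⌋₊))
    (dec : ∀ mm : ℕ, Fin (2 ^ ⌊(mm : ℝ) * R⌋₊) → (Fin mm → (Fin (T - τ) → 𝕏)))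
    (n : ℕ) (hm1 : 1 ≤ mfun θ n) :
    ∑ s : Fin n → (Fin T → 𝕏), iidLaw (markovLaw π' P T) n s * ((n : ℝ)⁻¹ *
        ∑ i, blockDist d T (s i)
          (if hi : i.1 < kfun θ n then s i
            else recomb x₀ τ (dec (mfun θ n) (enc (mfun θ n) (Jb τ θ n s))
              ⟨i.1 - kfun θ n, by have := kfun_le θ n; unfold mfun; omega⟩)))
      ≤ ((mfun θ n : ℝ) / n) * ((τ : ℝ) * (∑ x', ∑ y', d x' y'))
        + ((mfun θ n : ℝ) / n) * (∑ u : Fin (mfun θ n) → (Fin (T - τ) → 𝕏),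
            iidLaw (projDist (markovLaw π' P T) τ) (mfun θ n) u * (((mfun θ n : ℝ))⁻¹ *
              ∑ j, blockDist d (T - τ) (u j) (dec (mfun θ n) (enc (mfun θ n) u) j))) := by
  have hq0 : ∀ s, 0 ≤ markovLaw π' P T s := markovLaw_nonneg hπ'0 hPst.1 T
  have hq1 : ∑ s, markovLaw π' P T s = 1 := sum_markovLaw hPst T π' hπ'1
  have hnn : ∀ (s : Fin n → (Fin T → 𝕏)), 0 ≤ iidLaw (markovLaw π' P T) n s :=
    iidLaw_nonneg hq0 n
  have hn1 : 1 ≤ n := le_trans hm1 (by unfold mfun; omega)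
  have hinvnn : (0 : ℝ) ≤ (n : ℝ)⁻¹ := by positivity
  calc ∑ s : Fin n → (Fin T → 𝕏), iidLaw (markovLaw π' P T) n s * ((n : ℝ)⁻¹ *
        ∑ i, blockDist d T (s i)
          (if hi : i.1 < kfun θ n then s i
            else recomb x₀ τ (dec (mfun θ n) (enc (mfun θ n) (Jb τ θ n s))
              ⟨i.1 - kfun θ n, by have := kfun_le θ n; unfold mfun; omega⟩)))
      ≤ ∑ s : Fin n → (Fin T → 𝕏), iidLaw (markovLaw π' P T) n s * ((n : ℝ)⁻¹ *
          ((mfun θ n : ℝ) * ((τ : ℝ) * (∑ x', ∑ y', d x' y'))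
            + ∑ j : Fin (mfun θ n), blockDist d (T - τ) (Jb τ θ n s j)
                (dec (mfun θ n) (enc (mfun θ n) (Jb τ θ n s)) j))) := by
        refine Finset.sum_le_sum fun s _ => mul_le_mul_of_nonneg_left
          (mul_le_mul_of_nonneg_left ?_ hinvnn) (hnn s)
        exact inner_bound hdnn hdiag hτT x₀ θ enc dec n s
    _ = (n : ℝ)⁻¹ * ((mfun θ n : ℝ) * ((τ : ℝ) * (∑ x', ∑ y', d x' y')))
        + ∑ s : Fin n → (Fin T → 𝕏), iidLaw (markovLaw π' P T) n s * ((n : ℝ)⁻¹ *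
            ∑ j : Fin (mfun θ n), blockDist d (T - τ) (Jb τ θ n s j)
              (dec (mfun θ n) (enc (mfun θ n) (Jb τ θ n s)) j)) := by
        have hq1iid : ∑ s : Fin n → (Fin T → 𝕏), iidLaw (markovLaw π' P T) n s = 1 :=
          sum_iidLaw_one hq1 n
        calc ∑ s : Fin n → (Fin T → 𝕏), iidLaw (markovLaw π' P T) n s * ((n : ℝ)⁻¹ *
              ((mfun θ n : ℝ) * ((τ : ℝ) * (∑ x', ∑ y', d x' y'))
                + ∑ j : Fin (mfun θ n), blockDist d (T - τ) (Jb τ θ n s j)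
                    (dec (mfun θ n) (enc (mfun θ n) (Jb τ θ n s)) j)))
            = ∑ s : Fin n → (Fin T → 𝕏),
              (iidLaw (markovLaw π' P T) n s *
                  ((n : ℝ)⁻¹ * ((mfun θ n : ℝ) * ((τ : ℝ) * (∑ x', ∑ y', d x' y'))))
                + iidLaw (markovLaw π' P T) n s * ((n : ℝ)⁻¹ *
                  ∑ j : Fin (mfun θ n), blockDist d (T - τ) (Jb τ θ n s j)
                    (dec (mfun θ n) (enc (mfun θ n) (Jb τ θ n s)) j))) :=
              Finset.sum_congr rfl fun s _ => by ring
          _ = _ := by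
              rw [Finset.sum_add_distrib, ← Finset.sum_mul, hq1iid, one_mul]
    _ ≤ ((mfun θ n : ℝ) / n) * ((τ : ℝ) * (∑ x', ∑ y', d x' y'))
        + ((mfun θ n : ℝ) / n) * (∑ u : Fin (mfun θ n) → (Fin (T - τ) → 𝕏),
            iidLaw (projDist (markovLaw π' P T) τ) (mfun θ n) u * (((mfun θ n : ℝ))⁻¹ *
              ∑ j, blockDist d (T - τ) (u j) (dec (mfun θ n) (enc (mfun θ n) u) j))) := by
        have hm0 : (0 : ℝ) < (mfun θ n : ℝ) := by exact_mod_cast hm1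
        have hn0 : (0 : ℝ) < (n : ℝ) := by exact_mod_cast hn1
        have hstep3 : ∑ s : Fin n → (Fin T → 𝕏), iidLaw (markovLaw π' P T) n s * ((n : ℝ)⁻¹ *
              ∑ j : Fin (mfun θ n), blockDist d (T - τ) (Jb τ θ n s j)
                (dec (mfun θ n) (enc (mfun θ n) (Jb τ θ n s)) j))
            = ∑ t : Fin (mfun θ n) → (Fin T → 𝕏),
              iidLaw (markovLaw π' P T) (mfun θ n) t * ((n : ℝ)⁻¹ *
                ∑ j : Fin (mfun θ n), blockDist d (T - τ) (Jmap τ (t j))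
                  (dec (mfun θ n) (enc (mfun θ n) (fun j' => Jmap τ (t j'))) j)) :=
          iid_marginal' (markovLaw π' P T) hq1 (kfun_le θ n)
            (fun t => (n : ℝ)⁻¹ * ∑ j : Fin (mfun θ n), blockDist d (T - τ) (Jmap τ (t j))
              (dec (mfun θ n) (enc (mfun θ n) (fun j' => Jmap τ (t j'))) j))
        have hstep4 : ∑ u : Fin (mfun θ n) → (Fin (T - τ) → 𝕏),
              iidLaw (projDist (markovLaw π' P T) τ) (mfun θ n) u * ((n : ℝ)⁻¹ *
                ∑ j, blockDist d (T - τ) (u j) (dec (mfun θ n) (enc (mfun θ n) u) j))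
            = ∑ t : Fin (mfun θ n) → (Fin T → 𝕏),
              iidLaw (markovLaw π' P T) (mfun θ n) t * ((n : ℝ)⁻¹ *
                ∑ j : Fin (mfun θ n), blockDist d (T - τ) (Jmap τ (t j))
                  (dec (mfun θ n) (enc (mfun θ n) (fun j' => Jmap τ (t j'))) j)) := by
          rw [projDist_eq (markovLaw π' P T) τ]
          exact iid_pushforward (markovLaw π' P T) (Jmap τ) (mfun θ n)
            (fun u => (n : ℝ)⁻¹ * ∑ j, blockDist d (T - τ) (u j)
              (dec (mfun θ n) (enc (mfun θ n) u) j))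
        rw [hstep3, ← hstep4]
        have hfirst : (n : ℝ)⁻¹ * ((mfun θ n : ℝ) * ((τ : ℝ) * (∑ x', ∑ y', d x' y')))
            = ((mfun θ n : ℝ) / n) * ((τ : ℝ) * (∑ x', ∑ y', d x' y')) := by
          rw [div_eq_mul_inv]; ring
        rw [hfirst]
        refine le_of_eq (congrArg _ ?_)
        rw [Finset.mul_sum]
        refine Finset.sum_congr rfl fun u _ => ?_
        field_simp

set_option maxHeartbeats 2000000 in
lemma lemmaB (hdnn : ∀ x y, 0 ≤ d x y) (hdiag : ∀ x, d x x = 0)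
    (hπ'0 : ∀ x, 0 ≤ π' x) (hπ'1 : ∑ x, π' x = 1) (hPst : IsStochastic P)
    {T τ : ℕ} (hτT : τ ≤ T) (hT1 : 1 ≤ T) {D : ℝ} (hD : 0 < D) {R : ℝ} (hR0 : 0 ≤ R)
    (hR : R ∈ RDEset (iidLaw (projDist (markovLaw π' P T) τ)) (blockDist d (T - τ))
      ((T : ℝ) * D)) :
    R + ((τ : ℝ) * (∑ x', ∑ y', d x' y') + 1)
        / ((τ : ℝ) * (∑ x', ∑ y', d x' y') + (T : ℝ) * D + 1)
        * ((T : ℝ) * (Fintype.card 𝕏 : ℝ)) + 2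
      ∈ RDEset (iidLaw (markovLaw π' P T)) (blockDist d T) ((T : ℝ) * D) := by
  classical
  obtain ⟨enc, dec, hlim⟩ := hR
  set M : ℝ := ∑ x', ∑ y', d x' y' with hMdef
  have hM0 : 0 ≤ M := Finset.sum_nonneg fun x' _ => Finset.sum_nonneg fun y' _ => hdnn x' y'
  have hTD : 0 < (T : ℝ) * D := by
    have : (0:ℝ) < (T:ℝ) := by exact_mod_cast hT1
    positivity
  set θ : ℝ := ((τ : ℝ) * M + 1) / ((τ : ℝ) * M + (T : ℝ) * D + 1) with hθdef
  have hden : 0 < (τ : ℝ) * M + (T : ℝ) * D + 1 := by positivity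
  have hθ0 : 0 < θ := by
    apply div_pos (by positivity) hden
  have hθ1 : θ < 1 := by
    rw [hθdef, div_lt_one hden]
    linarith
  have hkey : (1 - θ) * ((τ : ℝ) * M + ((T : ℝ) * D + 1)) = (T : ℝ) * D := by
    rw [hθdef]
    field_simp
    ring
  set R' : ℝ := R + θ * ((T : ℝ) * (Fintype.card 𝕏 : ℝ)) + 2 with hR'def
  set x₀ : 𝕏 := Classical.arbitrary 𝕏 with hx₀
  set L : ℕ := Fintype.card 𝕏 with hL
  -- the combined codes
  have hidx2 : ∀ n (i : Fin n), ¬ i.1 < kfun θ n → i.1 - kfun θ n < mfun θ n := by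
    intro n i hi; have := kfun_le θ n; have := i.2; unfold mfun; omega
  set enc2 : ∀ n : ℕ, (Fin n → (Fin T → 𝕏)) → Fin (2 ^ ⌊(n : ℝ) * R'⌋₊) := fun n s =>
    if h : Fintype.card ((Fin (kfun θ n) → (Fin T → 𝕏)) × Fin (2 ^ ⌊(mfun θ n : ℝ) * R⌋₊))
        ≤ 2 ^ ⌊(n : ℝ) * R'⌋₊ then
      Fin.castLE h (Fintype.equivFin _
        (⟨fun i => s ⟨i.1, lt_of_lt_of_le i.2 (kfun_le θ n)⟩, enc (mfun θ n) (Jb τ θ n s)⟩ :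
          (Fin (kfun θ n) → (Fin T → 𝕏)) × Fin (2 ^ ⌊(mfun θ n : ℝ) * R⌋₊)))
    else ⟨0, Nat.pow_pos (by norm_num)⟩ with henc2
  set dec2 : ∀ n : ℕ, Fin (2 ^ ⌊(n : ℝ) * R'⌋₊) → (Fin n → (Fin T → 𝕏)) := fun n jidx =>
    if h : Fintype.card ((Fin (kfun θ n) → (Fin T → 𝕏)) × Fin (2 ^ ⌊(mfun θ n : ℝ) * R⌋₊))
        ≤ 2 ^ ⌊(n : ℝ) * R'⌋₊ then
      (fun p : (Fin (kfun θ n) → (Fin T → 𝕏)) × Fin (2 ^ ⌊(mfun θ n : ℝ) * R⌋₊) =>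
        fun i : Fin n =>
          if hi : i.1 < kfun θ n then p.1 ⟨i.1, hi⟩
          else recomb x₀ τ (dec (mfun θ n) p.2 ⟨i.1 - kfun θ n, hidx2 n i hi⟩))
      ((Fintype.equivFin _).symm
        (if hj : jidx.1 <
            Fintype.card ((Fin (kfun θ n) → (Fin T → 𝕏)) × Fin (2 ^ ⌊(mfun θ n : ℝ) * R⌋₊))
          then ⟨jidx.1, hj⟩ else ⟨0, Fintype.card_pos⟩))
    else fun _ => fun _ => x₀ with hdec2
  refine ⟨enc2, dec2, ?_⟩
  have hdecode : ∀ n : ℕ,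
      Fintype.card ((Fin (kfun θ n) → (Fin T → 𝕏)) × Fin (2 ^ ⌊(mfun θ n : ℝ) * R⌋₊))
        ≤ 2 ^ ⌊(n : ℝ) * R'⌋₊ → ∀ s : Fin n → (Fin T → 𝕏), ∀ i : Fin n,
      dec2 n (enc2 n s) i
        = if hi : i.1 < kfun θ n then s i
          else recomb x₀ τ (dec (mfun θ n) (enc (mfun θ n) (Jb τ θ n s))
            ⟨i.1 - kfun θ n, hidx2 n i hi⟩) := by
    intro n hg s i
    rw [henc2, hdec2]
    beta_reduce
    rw [dif_pos hg, dif_pos hg]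
    beta_reduce
    have h1 : (Fin.castLE hg (Fintype.equivFin _
        (⟨fun i => s ⟨i.1, lt_of_lt_of_le i.2 (kfun_le θ n)⟩, enc (mfun θ n) (Jb τ θ n s)⟩ :
          (Fin (kfun θ n) → (Fin T → 𝕏)) × Fin (2 ^ ⌊(mfun θ n : ℝ) * R⌋₊)))).1
        < Fintype.card ((Fin (kfun θ n) → (Fin T → 𝕏)) × Fin (2 ^ ⌊(mfun θ n : ℝ) * R⌋₊)) := by
      simpa using (Fintype.equivFin _
        (⟨fun i => s ⟨i.1, lt_of_lt_of_le i.2 (kfun_le θ n)⟩, enc (mfun θ n) (Jb τ θ n s)⟩ :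
          (Fin (kfun θ n) → (Fin T → 𝕏)) × Fin (2 ^ ⌊(mfun θ n : ℝ) * R⌋₊))).2
    rw [dif_pos h1]
    have h2 : (⟨(Fin.castLE hg (Fintype.equivFin _
        (⟨fun i => s ⟨i.1, lt_of_lt_of_le i.2 (kfun_le θ n)⟩, enc (mfun θ n) (Jb τ θ n s)⟩ :
          (Fin (kfun θ n) → (Fin T → 𝕏)) × Fin (2 ^ ⌊(mfun θ n : ℝ) * R⌋₊)))).1, h1⟩ :
          Fin (Fintype.card ((Fin (kfun θ n) → (Fin T → 𝕏))
            × Fin (2 ^ ⌊(mfun θ n : ℝ) * R⌋₊))))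
        = Fintype.equivFin _
          (⟨fun i => s ⟨i.1, lt_of_lt_of_le i.2 (kfun_le θ n)⟩, enc (mfun θ n) (Jb τ θ n s)⟩ :
            (Fin (kfun θ n) → (Fin T → 𝕏)) × Fin (2 ^ ⌊(mfun θ n : ℝ) * R⌋₊)) :=
      Fin.ext rfl
    rw [h2, Equiv.symm_apply_apply]
  -- probability facts
  have hq1 : ∑ ss, markovLaw π' P T ss = 1 := sum_markovLaw hPst T π' hπ'1
  have hq0 : ∀ ss, 0 ≤ markovLaw π' P T ss := markovLaw_nonneg hπ'0 hPst.1 T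
  have hq'1 : ∑ u, projDist (markovLaw π' P T) τ u = 1 := sum_projDist hq1 τ
  have hq'0 : ∀ u, 0 ≤ projDist (markovLaw π' P T) τ u := projDist_nonneg hq0 τ
  set e : ℕ → ℝ := fun m => ∑ u : Fin m → (Fin (T - τ) → 𝕏),
    iidLaw (projDist (markovLaw π' P T) τ) m u * ((m : ℝ)⁻¹ *
      ∑ j, blockDist d (T - τ) (u j) (dec m (enc m u) j)) with he
  have hebd : Filter.IsBoundedUnder (· ≤ ·) Filter.atTop e :=
    isBU_le fun m => distortion_le (fun m u => iidLaw_nonneg hq'0 m u)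
      (fun m => sum_iidLaw_one hq'1 m)
      (mul_nonneg (Nat.cast_nonneg _) hM0)
      (fun u v => blockDist_le hdnn u v) (fun u v => blockDist_nonneg hdnn u v)
      (fun m u => dec m (enc m u)) m
  have he0 : ∀ m, 0 ≤ e m := fun m =>
    distortion_nonneg (fun m u => iidLaw_nonneg hq'0 m u)
      (fun u v => blockDist_nonneg hdnn u v) (fun m u => dec m (enc m u)) m
  have hEev' : ∀ᶠ m in Filter.atTop, e m < (T : ℝ) * D + 1 :=
    eventually_lt_of_limsup_lt (lt_of_le_of_lt hlim (by linarith)) hebd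
  have h1θ : 0 < 1 - θ := by linarith
  -- m tends to infinity
  have hmt : Filter.Tendsto (fun n => mfun θ n) Filter.atTop Filter.atTop := by
    rw [Filter.tendsto_atTop]
    intro B
    filter_upwards [Filter.eventually_ge_atTop (⌈((B : ℝ) + 1) / (1 - θ)⌉₊ + 1)] with n hn
    have hc0 : ⌈((B : ℝ) + 1) / (1 - θ)⌉₊ ≤ n := by omega
    have hc1 : (⌈((B : ℝ) + 1) / (1 - θ)⌉₊ : ℝ) ≤ (n : ℝ) := Nat.cast_le.2 hc0
    have hnR : ((B : ℝ) + 1) / (1 - θ) ≤ (n : ℝ) := le_trans (Nat.le_ceil _) hc1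
    have h2 : (B : ℝ) + 1 ≤ (n : ℝ) * (1 - θ) := (div_le_iff₀ h1θ).1 hnR
    have h4 : (⌈θ * (n : ℝ)⌉₊ : ℝ) < θ * n + 1 := Nat.ceil_lt_add_one (by positivity)
    have h5 : (kfun θ n : ℝ) ≤ (⌈θ * (n : ℝ)⌉₊ : ℝ) := by
      exact_mod_cast (min_le_left _ _ : kfun θ n ≤ ⌈θ * (n : ℝ)⌉₊)
    have h6 : (kfun θ n : ℝ) + (B : ℝ) < (n : ℝ) := by nlinarith
    have h7 : kfun θ n + B < n := by exact_mod_cast h6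
    have h8 : mfun θ n = n - kfun θ n := rfl
    omega
  have hm1ev : ∀ᶠ n in Filter.atTop, 1 ≤ mfun θ n := hmt.eventually_ge_atTop 1
  have heev : ∀ᶠ n in Filter.atTop, e (mfun θ n) < (T : ℝ) * D + 1 := hmt.eventually hEev'
  -- capacity is eventually sufficient
  have hcard2 : Fintype.card 𝕏 ≤ 2 ^ L := by rw [hL]; exact Nat.lt_two_pow_self.le
  have hgood : ∀ᶠ n in Filter.atTop,
      Fintype.card ((Fin (kfun θ n) → (Fin T → 𝕏)) × Fin (2 ^ ⌊(mfun θ n : ℝ) * R⌋₊))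
        ≤ 2 ^ ⌊(n : ℝ) * R'⌋₊ := by
    filter_upwards [Filter.eventually_ge_atTop (T * L + 1)] with n hn
    have hcard : Fintype.card ((Fin (kfun θ n) → (Fin T → 𝕏))
        × Fin (2 ^ ⌊(mfun θ n : ℝ) * R⌋₊))
        = (Fintype.card 𝕏) ^ (T * kfun θ n) * 2 ^ ⌊(mfun θ n : ℝ) * R⌋₊ := by
      rw [Fintype.card_prod, Fintype.card_fun, Fintype.card_fun]
      simp only [Fintype.card_fin]
      rw [← pow_mul]
    suffices hexp : L * (T * kfun θ n) + ⌊(mfun θ n : ℝ) * R⌋₊ ≤ ⌊(n : ℝ) * R'⌋₊ by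
      calc Fintype.card ((Fin (kfun θ n) → (Fin T → 𝕏)) × Fin (2 ^ ⌊(mfun θ n : ℝ) * R⌋₊))
          = (Fintype.card 𝕏) ^ (T * kfun θ n) * 2 ^ ⌊(mfun θ n : ℝ) * R⌋₊ := hcard
        _ ≤ (2 ^ L) ^ (T * kfun θ n) * 2 ^ ⌊(mfun θ n : ℝ) * R⌋₊ :=
            Nat.mul_le_mul_right _ (Nat.pow_le_pow_left hcard2 _)
        _ = 2 ^ (L * (T * kfun θ n) + ⌊(mfun θ n : ℝ) * R⌋₊) := by rw [← pow_mul, ← pow_add]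
        _ ≤ 2 ^ ⌊(n : ℝ) * R'⌋₊ := Nat.pow_le_pow_right (by norm_num) hexp
    have hna : ((T * L + 1 : ℕ) : ℝ) ≤ (n : ℝ) := by exact_mod_cast hn
    have h4 : (⌈θ * (n : ℝ)⌉₊ : ℝ) < θ * n + 1 := Nat.ceil_lt_add_one (by positivity)
    have h5 : (kfun θ n : ℝ) ≤ (⌈θ * (n : ℝ)⌉₊ : ℝ) := by
      exact_mod_cast (min_le_left _ _ : kfun θ n ≤ ⌈θ * (n : ℝ)⌉₊)
    have h6 : (⌊(mfun θ n : ℝ) * R⌋₊ : ℝ) ≤ (mfun θ n : ℝ) * R :=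
      Nat.floor_le (by positivity)
    have h7 : (mfun θ n : ℝ) ≤ (n : ℝ) := by
      exact_mod_cast (by have := kfun_le θ n; unfold mfun; omega : mfun θ n ≤ n)
    have h8 : (mfun θ n : ℝ) * R ≤ (n : ℝ) * R := mul_le_mul_of_nonneg_right h7 hR0
    have h9 : (n : ℝ) * R' - 1 < (⌊(n : ℝ) * R'⌋₊ : ℝ) := Nat.sub_one_lt_floor _
    have hL0 : (0 : ℝ) ≤ (L : ℝ) := Nat.cast_nonneg _
    have hT0 : (0 : ℝ) ≤ (T : ℝ) := Nat.cast_nonneg _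
    have hmain : ((L * (T * kfun θ n) + ⌊(mfun θ n : ℝ) * R⌋₊ : ℕ) : ℝ)
        < (⌊(n : ℝ) * R'⌋₊ : ℝ) := by
      push_cast
      have hexpand : (n : ℝ) * R' = n * R + θ * ((T : ℝ) * (L : ℝ)) * n + 2 * n := by
        rw [hR'def, hL]; ring
      have hTL : (T : ℝ) * (L : ℝ) + 1 ≤ 2 * n := by push_cast at hna; nlinarith
      nlinarith [mul_le_mul_of_nonneg_left h5 (mul_nonneg hL0 hT0),
        mul_le_mul_of_nonneg_left (le_of_lt h4) (mul_nonneg hL0 hT0)]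
    exact_mod_cast (le_of_lt hmain)
  -- eventually the distortion is at most TD
  have hτM0 : (0 : ℝ) ≤ (τ : ℝ) * M := mul_nonneg (Nat.cast_nonneg _) hM0
  have hpt : ∀ᶠ n in Filter.atTop,
      ∑ x : Fin n → (Fin T → 𝕏), iidLaw (markovLaw π' P T) n x * ((n : ℝ)⁻¹ *
        ∑ i, blockDist d T (x i) (dec2 n (enc2 n x) i)) ≤ (T : ℝ) * D := by
    filter_upwards [hgood, hm1ev, heev] with n hg hm1 hev
    have hn1 : 1 ≤ n := le_trans hm1 (by unfold mfun; omega)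
    have hn0 : (0 : ℝ) < (n : ℝ) := by exact_mod_cast hn1
    have hc : ∑ x : Fin n → (Fin T → 𝕏), iidLaw (markovLaw π' P T) n x * ((n : ℝ)⁻¹ *
          ∑ i, blockDist d T (x i) (dec2 n (enc2 n x) i))
        = ∑ x : Fin n → (Fin T → 𝕏), iidLaw (markovLaw π' P T) n x * ((n : ℝ)⁻¹ *
          ∑ i, blockDist d T (x i)
            (if hi : i.1 < kfun θ n then x i
              else recomb x₀ τ (dec (mfun θ n) (enc (mfun θ n) (Jb τ θ n x))
                ⟨i.1 - kfun θ n, hidx2 n i hi⟩))) := by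
      refine Finset.sum_congr rfl fun x _ => ?_
      have hsum := Finset.sum_congr
        (rfl : (Finset.univ : Finset (Fin n)) = Finset.univ)
        (fun (i : Fin n) _ => congrArg (blockDist d T (x i)) (hdecode n hg x i))
      rw [hsum]
    rw [hc]
    refine le_trans (exp_bound hdnn hdiag hτT hπ'0 hπ'1 hPst x₀ θ enc dec n hm1) ?_
    have hmle : (mfun θ n : ℝ) ≤ (1 - θ) * n := by
      rcases le_or_gt (⌈θ * (n : ℝ)⌉₊) n with hcase | hcase
      · have hkeq : kfun θ n = ⌈θ * (n : ℝ)⌉₊ := min_eq_left hcase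
        have h1 : θ * (n : ℝ) ≤ (kfun θ n : ℝ) := by rw [hkeq]; exact Nat.le_ceil _
        have h3 : kfun θ n ≤ n := kfun_le θ n
        have h2 : (mfun θ n : ℝ) = (n : ℝ) - (kfun θ n : ℝ) := by
          have h4 : mfun θ n = n - kfun θ n := rfl
          rw [h4, Nat.cast_sub h3]
        rw [h2]
        have h5 : (1 - θ) * (n : ℝ) = (n : ℝ) - θ * n := by ring
        linarith
      · have hkeq : kfun θ n = n := min_eq_right hcase.le
        have h2 : mfun θ n = 0 := by unfold mfun; omega
        rw [h2]
        simpa using mul_nonneg h1θ.le hn0.le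
    have hdivle : (mfun θ n : ℝ) / n ≤ 1 - θ := by
      rw [div_le_iff₀ hn0]; linarith
    have hdiv0 : (0 : ℝ) ≤ (mfun θ n : ℝ) / n := by positivity
    calc ((mfun θ n : ℝ) / n) * ((τ : ℝ) * (∑ x', ∑ y', d x' y'))
          + ((mfun θ n : ℝ) / n) * e (mfun θ n)
        ≤ (1 - θ) * ((τ : ℝ) * M) + (1 - θ) * ((T : ℝ) * D + 1) := by
          refine add_le_add (mul_le_mul_of_nonneg_right hdivle hτM0) ?_
          calc ((mfun θ n : ℝ) / n) * e (mfun θ n)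
              ≤ ((mfun θ n : ℝ) / n) * ((T : ℝ) * D + 1) :=
                mul_le_mul_of_nonneg_left hev.le hdiv0
            _ ≤ (1 - θ) * ((T : ℝ) * D + 1) :=
                mul_le_mul_of_nonneg_right hdivle (by positivity)
      _ = (T : ℝ) * D := by rw [← mul_add, hkey]
  refine Filter.limsup_le_of_le ?_ hpt
  exact Filter.isCoboundedUnder_le_of_le Filter.atTop fun n =>
    distortion_nonneg (fun n x => iidLaw_nonneg hq0 n x)
      (fun u v => blockDist_nonneg hdnn u v) (fun n s => dec2 n (enc2 n s)) n

end LemmaB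

end BIAProof
/-- **Equation (29).** For every fixed `τ ≥ 1` and `D > 0`,
`lim_{T→∞} [ (1/T) R^E_{X^T_{[π',P]}}(TD) − (1/T) R^E_{J_τ(X^T_{[π',P]})}(TD) ] = 0`. -/
theorem bia_rd_minus_proj_rd_tendsto_zero
    {𝕏 : Type} [Fintype 𝕏] [DecidableEq 𝕏] (hcard : 2 ≤ Fintype.card 𝕏)
    (d : 𝕏 → 𝕏 → ℝ) (hdnn : ∀ x y, 0 ≤ d x y)
    (hdiag : ∀ x, d x x = 0) (hdpos : ∀ x y, x ≠ y → 0 < d x y)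
    (P : 𝕏 → 𝕏 → ℝ) (hP : IsStochastic P) (hPia : IsIrreducibleAperiodic P)
    (π : 𝕏 → ℝ) (hπ : IsProbDist π) (hπstat : IsStationaryDist P π)
    (π' : 𝕏 → ℝ) (hπ' : IsProbDist π')
    (τ : ℕ) (hτ : 1 ≤ τ) (D : ℝ) (hD : 0 < D) :
    Filter.Tendsto (fun T : ℕ =>
        (T : ℝ)⁻¹ * biaRDE π' P d T ((T : ℝ) * D) -
          (T : ℝ)⁻¹ * projRDE π' P d T τ ((T : ℝ) * D))
      Filter.atTop (nhds 0) := by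
  classical
  have hne : Nonempty 𝕏 := Fintype.card_pos_iff.1 (by omega)
  haveI := hne
  set M : ℝ := ∑ x', ∑ y', d x' y' with hMdef
  have hM0 : 0 ≤ M :=
    Finset.sum_nonneg fun x' _ => Finset.sum_nonneg fun y' _ => hdnn x' y'
  set C : ℝ := ((τ : ℝ) * M + 1) * (Fintype.card 𝕏 : ℝ) / D + 3 with hCdef
  have hC0 : 0 ≤ C := by
    rw [hCdef]
    have h1 : (0:ℝ) ≤ ((τ : ℝ) * M + 1) * (Fintype.card 𝕏 : ℝ) / D := by positivity
    linarith
  have hkeyev : ∀ᶠ T : ℕ in Filter.atTop,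
      0 ≤ biaRDE π' P d T ((T : ℝ) * D) - projRDE π' P d T τ ((T : ℝ) * D)
      ∧ biaRDE π' P d T ((T : ℝ) * D) - projRDE π' P d T τ ((T : ℝ) * D) ≤ C := by
    filter_upwards [Filter.eventually_ge_atTop τ] with T hτT
    have hT1 : 1 ≤ T := le_trans hτ hτT
    have hTD0 : (0:ℝ) ≤ (T : ℝ) * D := by positivity
    have hbia : biaRDE π' P d T ((T : ℝ) * D)
        = sInf (BIAProof.RDEset (iidLaw (markovLaw π' P T)) (blockDist d T)
          ((T : ℝ) * D)) := rfl
    have hproj : projRDE π' P d T τ ((T : ℝ) * D)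
        = sInf (BIAProof.RDEset (iidLaw (projDist (markovLaw π' P T) τ))
          (blockDist d (T - τ)) ((T : ℝ) * D)) := rfl
    have hdiagbia : ∀ s : Fin T → 𝕏, blockDist d T s s = 0 :=
      fun s => BIAProof.blockDist_self hdiag s
    have hdiagproj : ∀ s : Fin (T - τ) → 𝕏, blockDist d (T - τ) s s = 0 :=
      fun s => BIAProof.blockDist_self hdiag s
    constructor
    · -- lower bound : projRDE ≤ biaRDE
      rw [hbia, hproj, sub_nonneg]
      by_cases hbdd : BddBelow (BIAProof.RDEset (iidLaw (projDist (markovLaw π' P T) τ))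
          (blockDist d (T - τ)) ((T : ℝ) * D))
      · refine csInf_le_csInf hbdd
          ⟨_, BIAProof.card_mem_RDEset hdiagbia hTD0⟩ ?_
        intro R hR
        exact BIAProof.lemmaA hdnn hπ'.1 hπ'.2 hP hτT hR
      · rw [Real.sInf_of_not_bddBelow hbdd]
        exact BIAProof.sInf_RDEset_nonneg
    · -- upper bound
      obtain ⟨R, hRmem, hR0, hRle⟩ := BIAProof.exists_good_rate
        (law := iidLaw (projDist (markovLaw π' P T) τ)) hdiagproj hTD0 one_pos
      have hmem := BIAProof.lemmaB hdnn hdiag hπ'.1 hπ'.2 hP hτT hT1 hD hR0 hRmem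
      have hover0 : 0 ≤ ((τ : ℝ) * M + 1) / ((τ : ℝ) * M + (T : ℝ) * D + 1)
          * ((T : ℝ) * (Fintype.card 𝕏 : ℝ)) := by positivity
      have hle := BIAProof.sInf_RDEset_le_of_mem hmem (by linarith)
      rw [hbia, hproj]
      have hτM0 : (0:ℝ) ≤ (τ : ℝ) * M := mul_nonneg (Nat.cast_nonneg _) hM0
      have hover : ((τ : ℝ) * M + 1) / ((τ : ℝ) * M + (T : ℝ) * D + 1)
          * ((T : ℝ) * (Fintype.card 𝕏 : ℝ))
          ≤ ((τ : ℝ) * M + 1) * (Fintype.card 𝕏 : ℝ) / D := by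
        have hden : (0:ℝ) < (τ : ℝ) * M + (T : ℝ) * D + 1 := by positivity
        rw [div_mul_eq_mul_div, div_le_div_iff₀ hden hD]
        have h3 : (0:ℝ) ≤ ((τ:ℝ) * M + 1) * (Fintype.card 𝕏 : ℝ) :=
          mul_nonneg (by linarith) (Nat.cast_nonneg _)
        have h4 : (T:ℝ) * D ≤ (τ:ℝ) * M + (T:ℝ) * D + 1 := by linarith
        calc ((τ:ℝ) * M + 1) * ((T:ℝ) * (Fintype.card 𝕏 : ℝ)) * D
            = (((τ:ℝ) * M + 1) * (Fintype.card 𝕏 : ℝ)) * ((T:ℝ) * D) := by ring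
          _ ≤ (((τ:ℝ) * M + 1) * (Fintype.card 𝕏 : ℝ))
              * ((τ:ℝ) * M + (T:ℝ) * D + 1) := mul_le_mul_of_nonneg_left h4 h3
          _ = ((τ:ℝ) * M + 1) * (Fintype.card 𝕏 : ℝ)
              * ((τ:ℝ) * M + (T:ℝ) * D + 1) := by ring
      rw [← hMdef] at hle
      rw [hbia, hproj] at *
      rw [hCdef]
      linarith
  have heq : ∀ T : ℕ, (T : ℝ)⁻¹ * biaRDE π' P d T ((T : ℝ) * D)
      - (T : ℝ)⁻¹ * projRDE π' P d T τ ((T : ℝ) * D)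
      = (T : ℝ)⁻¹ * (biaRDE π' P d T ((T : ℝ) * D)
        - projRDE π' P d T τ ((T : ℝ) * D)) := fun T => by ring
  refine squeeze_zero' ?_ ?_ (tendsto_const_div_atTop_nhds_zero_nat C)
  · filter_upwards [hkeyev] with T hT
    rw [heq T]
    exact mul_nonneg (by positivity) hT.1
  · filter_upwards [hkeyev] with T hT
    rw [heq T, div_eq_inv_mul]
    exact mul_le_mul_of_nonneg_left hT.2 (by positivity)
end

section
/- For every probability distribution π' on 𝕏, every fixed τ ≥ 1, and every D > 0: lim_{T→∞} | (1/(T−τ)) R^E_{J_τ(X^T_{[π',P]})}(TD) − (1/(T−τ)) R^E_{J_τ(X^T_{[π',P]})}((T−τ)D) | = 0. -/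
open Filter Finset

def Ach {S T : Type} [Fintype S]
    (law : ∀ n : ℕ, (Fin n → S) → ℝ) (ρ : S → T → ℝ) (D : ℝ) : Set ℝ :=
  {R : ℝ |
    ∃ enc : ∀ n : ℕ, (Fin n → S) → Fin (2 ^ ⌊(n : ℝ) * R⌋₊),
    ∃ dec : ∀ n : ℕ, Fin (2 ^ ⌊(n : ℝ) * R⌋₊) → (Fin n → T),
      Filter.limsup (fun n : ℕ =>
        ∑ x : Fin n → S, law n x * ((n : ℝ)⁻¹ *
          ∑ i, ρ (x i) (dec n (enc n x) i))) Filter.atTop ≤ D}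

lemma Ach_mono {S T : Type} [Fintype S]
    (law : ∀ n : ℕ, (Fin n → S) → ℝ) (ρ : S → T → ℝ) {D D' : ℝ} (h : D ≤ D') :
    Ach law ρ D ⊆ Ach law ρ D' := by
  rintro R ⟨enc, dec, hl⟩
  exact ⟨enc, dec, hl.trans h⟩

lemma Ach_zero_transfer {S T : Type} [Fintype S]
    (law : ∀ n : ℕ, (Fin n → S) → ℝ) (ρ : S → T → ℝ) (D : ℝ) {R R' : ℝ}
    (hR : R ≤ 0) (hR' : R' ≤ 0) (h : R ∈ Ach law ρ D) : R' ∈ Ach law ρ D := by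
  obtain ⟨enc, dec, hl⟩ := h
  have hn : ∀ n : ℕ, 2 ^ ⌊(n : ℝ) * R⌋₊ = 2 ^ ⌊(n : ℝ) * R'⌋₊ := by
    intro n
    rw [Nat.floor_of_nonpos (mul_nonpos_iff.mpr (Or.inl ⟨n.cast_nonneg, hR⟩)),
      Nat.floor_of_nonpos (mul_nonpos_iff.mpr (Or.inl ⟨n.cast_nonneg, hR'⟩))]
  refine ⟨fun n x => Fin.cast (hn n) (enc n x), fun n y => dec n (Fin.cast (hn n).symm y), ?_⟩
  have key : ∀ n (x : Fin n → S),
      Fin.cast (hn n).symm (Fin.cast (hn n) (enc n x)) = enc n x := by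
    intro n x; ext; simp
  simpa only [key] using hl

lemma Ach_perfect {S : Type} [Fintype S] [Nonempty S]
    (law : ∀ n : ℕ, (Fin n → S) → ℝ) (ρ : S → S → ℝ) (hρ : ∀ s, ρ s s = 0) {D : ℝ}
    (hD : 0 ≤ D) : ((Fintype.card S : ℝ)) ∈ Ach law ρ D := by
  have hfl : ∀ n : ℕ, ⌊(n : ℝ) * (Fintype.card S : ℝ)⌋₊ = n * Fintype.card S := by
    intro n; rw [← Nat.cast_mul, Nat.floor_natCast]
  have hcard : ∀ n : ℕ, Fintype.card (Fin n → S) ≤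
      Fintype.card (Fin (2 ^ ⌊(n : ℝ) * (Fintype.card S : ℝ)⌋₊)) := by
    intro n
    rw [Fintype.card_fun, Fintype.card_fin, Fintype.card_fin, hfl, mul_comm, pow_mul]
    exact Nat.pow_le_pow_left Nat.lt_two_pow_self.le n
  have E : ∀ n : ℕ, (Fin n → S) ↪ Fin (2 ^ ⌊(n : ℝ) * (Fintype.card S : ℝ)⌋₊) :=
    fun n => Classical.choice (Function.Embedding.nonempty_of_card_le (hcard n))
  classical
  refine ⟨fun n x => E n x, fun n y => Function.invFun (E n) y, ?_⟩
  have hdecenc : ∀ n (x : Fin n → S), Function.invFun (E n) (E n x) = x := fun n x =>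
    Function.leftInverse_invFun (E n).injective x
  have : (fun n : ℕ => ∑ x : Fin n → S, law n x * ((n : ℝ)⁻¹ *
      ∑ i, ρ (x i) (Function.invFun (E n) (E n x) i))) = fun _ => (0 : ℝ) := by
    funext n
    simp [hdecenc, hρ]
  rw [this, limsup_const]
  exact hD

section Dist
variable {𝕏 : Type} [Fintype 𝕏] [DecidableEq 𝕏]

lemma sum_chain (P : 𝕏 → 𝕏 → ℝ) (hP : ∀ x, ∑ y, P x y = 1) :
    ∀ (n : ℕ) (μ : 𝕏 → ℝ),
      ∑ x : Fin (n + 1) → 𝕏, μ (x 0) * ∏ i : Fin n, P (x i.castSucc) (x i.succ) = ∑ a, μ a := by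
  intro n
  induction n with
  | zero =>
    intro μ
    exact Fintype.sum_equiv (Equiv.funUnique (Fin 1) 𝕏) _ _ (fun x => by simp)
  | succ n ih =>
    intro μ
    have e := Fin.consEquiv (fun _ : Fin (n + 2) => 𝕏)
    rw [← Fintype.sum_equiv (Fin.consEquiv (fun _ : Fin (n + 2) => 𝕏))
      (fun p : 𝕏 × (Fin (n + 1) → 𝕏) => μ ((Fin.cons p.1 p.2 : Fin (n+2) → 𝕏) 0) *
        ∏ i : Fin (n + 1), P ((Fin.cons p.1 p.2 : Fin (n+2) → 𝕏) i.castSucc)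
          ((Fin.cons p.1 p.2 : Fin (n+2) → 𝕏) i.succ))
      (fun x : Fin (n + 2) → 𝕏 => μ (x 0) *
        ∏ i : Fin (n + 1), P (x i.castSucc) (x i.succ))
      (fun p => rfl)]
    rw [Fintype.sum_prod_type]
    have key : ∀ (a : 𝕏) (y : Fin (n + 1) → 𝕏),
        μ ((Fin.cons a y : Fin (n+2) → 𝕏) 0) *
          ∏ i : Fin (n + 1), P ((Fin.cons a y : Fin (n+2) → 𝕏) i.castSucc)
            ((Fin.cons a y : Fin (n+2) → 𝕏) i.succ)
        = μ a * ((P a) (y 0) * ∏ i : Fin n, P (y i.castSucc) (y i.succ)) := by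
      intro a y
      rw [Fin.prod_univ_succ]
      simp [← Fin.succ_castSucc]
    simp_rw [key, ← Finset.mul_sum]
    have hin : ∀ a : 𝕏, ∑ y : Fin (n + 1) → 𝕏,
        (P a) (y 0) * ∏ i : Fin n, P (y i.castSucc) (y i.succ) = 1 :=
      fun a => (ih (P a)).trans (hP a)
    simp_rw [hin, mul_one]

lemma sum_markovLaw (π' : 𝕏 → ℝ) (P : 𝕏 → 𝕏 → ℝ) (hπ'1 : ∑ a, π' a = 1)
    (hP : ∀ x, ∑ y, P x y = 1) (T : ℕ) : ∑ x : Fin T → 𝕏, markovLaw π' P T x = 1 := by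
  cases T with
  | zero => simp [markovLaw]
  | succ n => exact (sum_chain P hP n π').trans hπ'1

lemma markovLaw_nonneg (π' : 𝕏 → ℝ) (P : 𝕏 → 𝕏 → ℝ) (hπ'0 : ∀ a, 0 ≤ π' a)
    (hP0 : ∀ x y, 0 ≤ P x y) (T : ℕ) (x : Fin T → 𝕏) : 0 ≤ markovLaw π' P T x := by
  cases T with
  | zero => exact zero_le_one
  | succ n => exact mul_nonneg (hπ'0 _) (Finset.prod_nonneg fun i _ => hP0 _ _)

lemma projDist_nonneg {T : ℕ} (q : (Fin T → 𝕏) → ℝ) (hq : ∀ s, 0 ≤ q s) (τ : ℕ)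
    (r : Fin (T - τ) → 𝕏) : 0 ≤ projDist q τ r :=
  Finset.sum_nonneg fun s _ => by
    split
    exacts [hq s, le_rfl]

lemma sum_projDist {T : ℕ} (q : (Fin T → 𝕏) → ℝ) (τ : ℕ) :
    ∑ r : Fin (T - τ) → 𝕏, projDist q τ r = ∑ s : Fin T → 𝕏, q s := by
  unfold projDist
  rw [Finset.sum_comm]
  refine Finset.sum_congr rfl fun s _ => ?_
  have : ∀ r : Fin (T - τ) → 𝕏,
      (if (∀ i : Fin (T - τ), s ⟨τ + i.val, by have := i.isLt; omega⟩ = r i) then q s else 0)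
      = (if (fun i : Fin (T - τ) => s ⟨τ + i.val, by have := i.isLt; omega⟩) = r
          then q s else 0) := by
    intro r
    refine if_congr ?_ rfl rfl
    exact (funext_iff).symm
  simp_rw [this]
  rw [Finset.sum_ite_eq]
  simp

lemma iidLaw_nonneg {S : Type} [Fintype S] (q : S → ℝ) (hq : ∀ s, 0 ≤ q s) (n : ℕ)
    (x : Fin n → S) : 0 ≤ iidLaw q n x :=
  Finset.prod_nonneg fun i _ => hq _

lemma sum_iidLaw {S : Type} [Fintype S] (q : S → ℝ) (hq1 : ∑ s, q s = 1) :
    ∀ n : ℕ, ∑ x : Fin n → S, iidLaw q n x = 1 := by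
  intro n
  induction n with
  | zero => simp [iidLaw]
  | succ n ih =>
    rw [← Fintype.sum_equiv (Fin.consEquiv (fun _ : Fin (n + 1) => S))
      (fun p : S × (Fin n → S) => iidLaw q (n + 1) (Fin.cons p.1 p.2))
      (fun x : Fin (n + 1) → S => iidLaw q (n + 1) x) (fun p => rfl)]
    rw [Fintype.sum_prod_type]
    have key : ∀ (a : S) (y : Fin n → S),
        iidLaw q (n + 1) (Fin.cons a y) = q a * iidLaw q n y := by
      intro a y
      unfold iidLaw
      rw [Fin.prod_univ_succ]
      simp
    simp_rw [key, ← Finset.mul_sum, ih, mul_one, hq1]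

end Dist

lemma exists_top_subset {α : Type} [Fintype α] [DecidableEq α] (f : α → ℝ) :
    ∀ k, k ≤ Fintype.card α →
      ∃ S : Finset α, S.card = k ∧ ∀ j ∉ S, ∀ i ∈ S, f j ≤ f i := by
  intro k
  induction k with
  | zero => exact fun _ => ⟨∅, Finset.card_empty, by simp⟩
  | succ k ih =>
    intro hk
    obtain ⟨S, hcard, hinv⟩ := ih (Nat.le_of_succ_le hk)
    have hne : Sᶜ.Nonempty := by
      rw [← Finset.card_pos, Finset.card_compl, hcard]
      omega
    obtain ⟨a, ha, hmax⟩ := Finset.exists_max_image Sᶜ f hne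
    have haS : a ∉ S := Finset.mem_compl.mp ha
    refine ⟨insert a S, by rw [Finset.card_insert_of_notMem haS, hcard], ?_⟩
    intro j hj i hi
    rw [Finset.mem_insert] at hj hi
    push_neg at hj
    rcases hi with rfl | hi
    · exact hmax j (Finset.mem_compl.mpr hj.2)
    · exact hinv j hj.2 i hi

lemma exists_top_fraction {α : Type} [Fintype α] [DecidableEq α] (f : α → ℝ) (k : ℕ)
    (hk : k ≤ Fintype.card α) :
    ∃ S : Finset α, S.card = k ∧
      (k : ℝ) * ∑ j, f j ≤ (Fintype.card α : ℝ) * ∑ j ∈ S, f j := by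
  obtain ⟨S, hcard, hinv⟩ := exists_top_subset f k hk
  refine ⟨S, hcard, ?_⟩
  have h1 : ∀ j ∈ Sᶜ, (k : ℝ) * f j ≤ ∑ i ∈ S, f i := by
    intro j hj
    have := Finset.card_nsmul_le_sum S f (f j)
      (fun i hi => hinv j (Finset.mem_compl.mp hj) i hi)
    rwa [hcard, nsmul_eq_mul] at this
  have h2 : (k : ℝ) * ∑ j ∈ Sᶜ, f j ≤ (Sᶜ.card : ℝ) * ∑ i ∈ S, f i := by
    rw [Finset.mul_sum]
    calc ∑ j ∈ Sᶜ, (k : ℝ) * f j ≤ ∑ _j ∈ Sᶜ, ∑ i ∈ S, f i :=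
          Finset.sum_le_sum h1
      _ = (Sᶜ.card : ℝ) * ∑ i ∈ S, f i := by rw [Finset.sum_const, nsmul_eq_mul]
  have h3 : (Sᶜ.card : ℝ) = (Fintype.card α : ℝ) - k := by
    rw [Finset.card_compl, hcard, Nat.cast_sub hk]
  have h4 : ∑ j, f j = ∑ j ∈ S, f j + ∑ j ∈ Sᶜ, f j :=
    (Finset.sum_add_sum_compl S f).symm
  rw [h3] at h2
  rw [h4]
  linarith [h2]

noncomputable def corr {𝕏 : Type} {m τ : ℕ} (y : Fin m → 𝕏)
    (γ : (Fin τ → Fin m) × (Fin τ → 𝕏)) : Fin m → 𝕏 := fun j =>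
  if h : ∃ i, γ.1 i = j then γ.2 h.choose else y j

lemma corr_exists {𝕏 : Type} [Fintype 𝕏] [DecidableEq 𝕏] (d : 𝕏 → 𝕏 → ℝ)
    (hdnn : ∀ x y, 0 ≤ d x y) (hdiag : ∀ x, d x x = 0) {m τ : ℕ} (hτm : τ ≤ m)
    (s y : Fin m → 𝕏) :
    ∃ γ : (Fin τ → Fin m) × (Fin τ → 𝕏),
      blockDist d m s (corr y γ) ≤ (1 - (τ : ℝ) / m) * blockDist d m s y := by
  rcases Nat.eq_zero_or_pos m with rfl | hm
  · interval_cases τ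
    exact ⟨⟨Fin.elim0, Fin.elim0⟩, by simp [blockDist]⟩
  obtain ⟨S, hScard, hSsum⟩ := exists_top_fraction (fun j => d (s j) (y j)) τ
    (by rwa [Fintype.card_fin])
  rw [Fintype.card_fin] at hSsum
  set p : Fin τ → Fin m := fun i => (S.equivFin.symm (Fin.cast hScard.symm i) : _) with hp
  have hsurj : ∀ j ∈ S, ∃ i, p i = j := by
    intro j hj
    refine ⟨Fin.cast hScard (S.equivFin ⟨j, hj⟩), ?_⟩
    simp [hp]
  refine ⟨⟨p, fun i => s (p i)⟩, ?_⟩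
  have hterm : ∀ j, d (s j) (corr y (p, fun i => s (p i)) j) ≤
      if j ∈ S then 0 else d (s j) (y j) := by
    intro j
    unfold corr
    by_cases hex : ∃ i, p i = j
    · rw [dif_pos hex]
      have : ((p, fun i => s (p i)).2 : Fin τ → 𝕏) hex.choose = s j := by
        show s (p hex.choose) = s j
        rw [hex.choose_spec]
      rw [this, hdiag]
      split
      · exact le_rfl
      · exact hdnn _ _
    · rw [dif_neg hex]
      have hjS : j ∉ S := fun hj => hex (hsurj j hj)
      rw [if_neg hjS]
  have hsum : blockDist d m s (corr y (p, fun i => s (p i))) ≤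
      ∑ j, (if j ∈ S then 0 else d (s j) (y j)) :=
    Finset.sum_le_sum fun j _ => hterm j
  have hsplit : ∑ j, (if j ∈ S then 0 else d (s j) (y j))
      = ∑ j, d (s j) (y j) - ∑ j ∈ S, d (s j) (y j) := by
    have : ∀ j, (if j ∈ S then (0:ℝ) else d (s j) (y j))
        = d (s j) (y j) - (if j ∈ S then d (s j) (y j) else 0) := by
      intro j; split <;> ring
    simp_rw [this, Finset.sum_sub_distrib]
    congr 1
    rw [Finset.sum_ite_mem, Finset.univ_inter]
  have hmpos : (0:ℝ) < m := by exact_mod_cast hm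
  have hfrac : (τ : ℝ) / m * ∑ j, d (s j) (y j) ≤ ∑ j ∈ S, d (s j) (y j) := by
    rw [div_mul_eq_mul_div, div_le_iff₀ hmpos]
    nlinarith [hSsum]
  have hbd : blockDist d m s y = ∑ j, d (s j) (y j) := rfl
  rw [hbd]
  calc blockDist d m s (corr y (p, fun i => s (p i)))
      ≤ ∑ j, d (s j) (y j) - ∑ j ∈ S, d (s j) (y j) := hsum.trans (le_of_eq hsplit)
    _ ≤ (1 - (τ : ℝ) / m) * ∑ j, d (s j) (y j) := by nlinarith [hfrac]

lemma limsup_aux {F G : ℕ → ℝ} {L B c : ℝ} (hc : 0 < c)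
    (hGF : ∀ n, G n ≤ c * F n) (hFB : ∀ n, F n ≤ B) (hG0 : ∀ n, 0 ≤ G n)
    (hlim : Filter.limsup F Filter.atTop ≤ L) :
    Filter.limsup G Filter.atTop ≤ c * L := by
  have hFbd : Filter.IsBoundedUnder (· ≤ ·) Filter.atTop F :=
    Filter.isBoundedUnder_of ⟨B, hFB⟩
  have hGcb : Filter.IsCoboundedUnder (· ≤ ·) Filter.atTop G :=
    Filter.isCoboundedUnder_le_of_eventually_le Filter.atTop (Filter.Eventually.of_forall hG0)
  refine le_of_forall_sub_le fun ε hε => ?_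
  rw [sub_le_iff_le_add]
  have hev : ∀ᶠ n in Filter.atTop, F n < L + ε / c :=
    Filter.eventually_lt_of_limsup_lt
      (lt_of_le_of_lt hlim (lt_add_of_pos_right _ (div_pos hε hc))) hFbd
  apply Filter.limsup_le_of_le hGcb
  filter_upwards [hev] with n hn
  calc G n ≤ c * F n := hGF n
    _ ≤ c * (L + ε / c) := mul_le_mul_of_nonneg_left hn.le hc.le
    _ = c * L + ε := by field_simp

lemma main_step {𝕏 : Type} [Fintype 𝕏] [DecidableEq 𝕏] [Nonempty 𝕏]
    (d : 𝕏 → 𝕏 → ℝ) (hdnn : ∀ x y, 0 ≤ d x y) (hdiag : ∀ x, d x x = 0)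
    {m τ : ℕ} (hτm : τ < m)
    (q : (Fin m → 𝕏) → ℝ) (hq0 : ∀ s, 0 ≤ q s) (hq1 : ∑ s, q s = 1)
    {L R : ℝ} (hL : 0 ≤ L) (hR : 0 ≤ R)
    (hmem : R ∈ Ach (iidLaw q) (blockDist d m) L) :
    R + (Nat.clog 2 (Fintype.card ((Fin τ → Fin m) × (Fin τ → 𝕏))) : ℝ) ∈
      Ach (iidLaw q) (blockDist d m) ((1 - (τ : ℝ) / m) * L) := by
  classical
  obtain ⟨enc, dec, hlim⟩ := hmem
  set Γ := (Fin τ → Fin m) × (Fin τ → 𝕏) with hΓ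
  set c := Nat.clog 2 (Fintype.card Γ) with hc
  have hm0 : 0 < m := lt_of_le_of_lt (Nat.zero_le τ) hτm
  have hmR : (0:ℝ) < m := by exact_mod_cast hm0
  have hfloor : ∀ n : ℕ, ⌊(n : ℝ) * (R + (c:ℝ))⌋₊ = ⌊(n : ℝ) * R⌋₊ + n * c := by
    intro n
    have h1 : (n : ℝ) * (R + (c:ℝ)) = (n : ℝ) * R + ((n * c : ℕ) : ℝ) := by push_cast; ring
    rw [h1, Nat.floor_add_natCast (by positivity)]
  have hsize : ∀ n : ℕ,
      Fintype.card (Fin (2 ^ ⌊(n : ℝ) * R⌋₊) × (Fin n → Γ)) ≤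
        Fintype.card (Fin (2 ^ ⌊(n : ℝ) * (R + (c:ℝ))⌋₊)) := by
    intro n
    rw [Fintype.card_prod, Fintype.card_fin, Fintype.card_fin, Fintype.card_fun,
      Fintype.card_fin, hfloor, pow_add, mul_comm n c, pow_mul]
    exact Nat.mul_le_mul_left _ (Nat.pow_le_pow_left (Nat.le_pow_clog one_lt_two _) n)
  have E : ∀ n : ℕ, (Fin (2 ^ ⌊(n : ℝ) * R⌋₊) × (Fin n → Γ)) ↪
      Fin (2 ^ ⌊(n : ℝ) * (R + (c:ℝ))⌋₊) :=
    fun n => Classical.choice (Function.Embedding.nonempty_of_card_le (hsize n))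
  have hNE : ∀ n : ℕ, Nonempty (Fin (2 ^ ⌊(n : ℝ) * R⌋₊) × (Fin n → Γ)) := by
    intro n
    refine ⟨⟨⟨0, ?_⟩, fun _ => ⟨fun _ => ⟨0, hm0⟩, fun _ => Classical.arbitrary 𝕏⟩⟩⟩
    positivity
  have hγ := fun (s y : Fin m → 𝕏) => corr_exists d hdnn hdiag hτm.le s y
  set γb : (Fin m → 𝕏) → (Fin m → 𝕏) → Γ := fun s y => (hγ s y).choose with hγb
  have hγspec : ∀ s y, blockDist d m s (corr y (γb s y)) ≤
      (1 - (τ : ℝ) / m) * blockDist d m s y := fun s y => (hγ s y).choose_spec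
  refine ⟨fun n x => E n ⟨enc n x, fun i => γb (x i) (dec n (enc n x) i)⟩,
    fun n z => (fun w : Fin (2 ^ ⌊(n : ℝ) * R⌋₊) × (Fin n → Γ) =>
        (fun i => corr (dec n w.1 i) (w.2 i)))
      (@Function.invFun _ _ (hNE n) (E n) z), ?_⟩
  have hkey : ∀ (n : ℕ) (x : Fin n → (Fin m → 𝕏)),
      @Function.invFun _ _ (hNE n) (E n)
          (E n ⟨enc n x, fun i => γb (x i) (dec n (enc n x) i)⟩)
        = ⟨enc n x, fun i => γb (x i) (dec n (enc n x) i)⟩ :=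
    fun n x => @Function.leftInverse_invFun _ _ (hNE n) _ (E n).injective _
  set F : ℕ → ℝ := fun n => ∑ x : Fin n → (Fin m → 𝕏), iidLaw q n x *
    ((n : ℝ)⁻¹ * ∑ i, blockDist d m (x i) (dec n (enc n x) i)) with hF
  set G : ℕ → ℝ := fun n => ∑ x : Fin n → (Fin m → 𝕏), iidLaw q n x *
    ((n : ℝ)⁻¹ * ∑ i, blockDist d m (x i)
      (corr (dec n (enc n x) i) (γb (x i) (dec n (enc n x) i)))) with hG
  have hfun : (fun n : ℕ => ∑ x : Fin n → (Fin m → 𝕏), iidLaw q n x * ((n : ℝ)⁻¹ *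
      ∑ i, blockDist d m (x i)
        ((fun w : Fin (2 ^ ⌊(n : ℝ) * R⌋₊) × (Fin n → Γ) =>
            (fun j => corr (dec n w.1 j) (w.2 j)))
          (@Function.invFun _ _ (hNE n) (E n)
            (E n ⟨enc n x, fun j => γb (x j) (dec n (enc n x) j)⟩)) i))) = G := by
    funext n
    rw [hG]
    refine Finset.sum_congr rfl fun x _ => ?_
    rw [hkey n x]
  rw [hfun]
  -- bound on d
  obtain ⟨p0, -, hp0⟩ := Finset.exists_max_image (Finset.univ : Finset (𝕏 × 𝕏))
    (fun p => d p.1 p.2) Finset.univ_nonempty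
  set Dm := d p0.1 p0.2 with hDm
  have hρB : ∀ s t : Fin m → 𝕏, blockDist d m s t ≤ (m : ℝ) * Dm := by
    intro s t
    calc blockDist d m s t = ∑ j, d (s j) (t j) := rfl
      _ ≤ ∑ _j : Fin m, Dm :=
          Finset.sum_le_sum fun j _ => hp0 (s j, t j) (Finset.mem_univ _)
      _ = (m : ℝ) * Dm := by
          rw [Finset.sum_const, Finset.card_univ, Fintype.card_fin, nsmul_eq_mul]
  have hρ0 : ∀ s t : Fin m → 𝕏, 0 ≤ blockDist d m s t :=
    fun s t => Finset.sum_nonneg fun j _ => hdnn _ _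
  have hDm0 : 0 ≤ Dm := hdnn _ _
  have hθ : 0 < 1 - (τ : ℝ) / m := by
    have h1 : (τ : ℝ) / m < 1 := (div_lt_one hmR).mpr (by exact_mod_cast hτm)
    linarith
  have hFB : ∀ n, F n ≤ (m : ℝ) * Dm := by
    intro n
    have hinner : ∀ x : Fin n → (Fin m → 𝕏),
        (n : ℝ)⁻¹ * ∑ i, blockDist d m (x i) (dec n (enc n x) i) ≤ (m : ℝ) * Dm := by
      intro x
      rcases Nat.eq_zero_or_pos n with rfl | hn
      · simp
        positivity
      · have hnR : (0:ℝ) < n := by exact_mod_cast hn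
        have h1 : ∑ i, blockDist d m (x i) (dec n (enc n x) i) ≤ (n : ℝ) * ((m : ℝ) * Dm) := by
          calc ∑ i, blockDist d m (x i) (dec n (enc n x) i)
              ≤ ∑ _i : Fin n, (m : ℝ) * Dm := Finset.sum_le_sum fun i _ => hρB _ _
            _ = (n : ℝ) * ((m : ℝ) * Dm) := by
                rw [Finset.sum_const, Finset.card_univ, Fintype.card_fin, nsmul_eq_mul]
        calc (n : ℝ)⁻¹ * ∑ i, blockDist d m (x i) (dec n (enc n x) i)
            ≤ (n : ℝ)⁻¹ * ((n : ℝ) * ((m : ℝ) * Dm)) :=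
              mul_le_mul_of_nonneg_left h1 (by positivity)
          _ = (m : ℝ) * Dm := by field_simp
    calc F n ≤ ∑ x : Fin n → (Fin m → 𝕏), iidLaw q n x * ((m : ℝ) * Dm) :=
          Finset.sum_le_sum fun x _ =>
            mul_le_mul_of_nonneg_left (hinner x) (iidLaw_nonneg q hq0 n x)
      _ = (m : ℝ) * Dm := by rw [← Finset.sum_mul, sum_iidLaw q hq1 n, one_mul]
  have hG0 : ∀ n, 0 ≤ G n := by
    intro n
    refine Finset.sum_nonneg fun x _ => mul_nonneg (iidLaw_nonneg q hq0 n x) ?_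
    refine mul_nonneg (by positivity) (Finset.sum_nonneg fun i _ => hρ0 _ _)
  have hGF : ∀ n, G n ≤ (1 - (τ : ℝ) / m) * F n := by
    intro n
    rw [hF, Finset.mul_sum]
    refine Finset.sum_le_sum fun x _ => ?_
    have h1 : ∑ i, blockDist d m (x i)
        (corr (dec n (enc n x) i) (γb (x i) (dec n (enc n x) i)))
        ≤ (1 - (τ : ℝ) / m) * ∑ i, blockDist d m (x i) (dec n (enc n x) i) := by
      rw [Finset.mul_sum]
      exact Finset.sum_le_sum fun i _ => hγspec _ _
    calc iidLaw q n x * ((n : ℝ)⁻¹ * ∑ i, blockDist d m (x i)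
          (corr (dec n (enc n x) i) (γb (x i) (dec n (enc n x) i))))
        ≤ iidLaw q n x * ((n : ℝ)⁻¹ *
            ((1 - (τ : ℝ) / m) * ∑ i, blockDist d m (x i) (dec n (enc n x) i))) := by
          refine mul_le_mul_of_nonneg_left ?_ (iidLaw_nonneg q hq0 n x)
          exact mul_le_mul_of_nonneg_left h1 (by positivity)
      _ = (1 - (τ : ℝ) / m) * (iidLaw q n x *
            ((n : ℝ)⁻¹ * ∑ i, blockDist d m (x i) (dec n (enc n x) i))) := by ring
  exact limsup_aux hθ hGF hFB hG0 hlim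

lemma Ach_sInf_nonneg {S T : Type} [Fintype S]
    (law : ∀ n : ℕ, (Fin n → S) → ℝ) (ρ : S → T → ℝ) (D : ℝ) :
    0 ≤ sInf (Ach law ρ D) := by
  by_cases hneg : ∃ R ∈ Ach law ρ D, R < 0
  · obtain ⟨R, hR, hRneg⟩ := hneg
    have hnb : ¬BddBelow (Ach law ρ D) := by
      rw [not_bddBelow_iff]
      intro x
      exact ⟨min x R - 1,
        Ach_zero_transfer law ρ D hRneg.le (by linarith [min_le_right x R]) hR,
        by linarith [min_le_left x R]⟩
    rw [Real.sInf_of_not_bddBelow hnb]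
  · push_neg at hneg
    exact Real.sInf_nonneg fun x hx => hneg x hx

lemma sandwich {𝕏 : Type} [Fintype 𝕏] [DecidableEq 𝕏] [Nonempty 𝕏]
    (d : 𝕏 → 𝕏 → ℝ) (hdnn : ∀ x y, 0 ≤ d x y) (hdiag : ∀ x, d x x = 0)
    {m τ : ℕ} (hτm : τ < m)
    (q : (Fin m → 𝕏) → ℝ) (hq0 : ∀ s, 0 ≤ q s) (hq1 : ∑ s, q s = 1)
    {L L' : ℝ} (hL' : 0 ≤ L') (hLL : L' ≤ L) (hshift : (1 - (τ : ℝ) / m) * L ≤ L') :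
    sInf (Ach (iidLaw q) (blockDist d m) L) ≤ sInf (Ach (iidLaw q) (blockDist d m) L') ∧
    sInf (Ach (iidLaw q) (blockDist d m) L') ≤ sInf (Ach (iidLaw q) (blockDist d m) L) +
      (Nat.clog 2 (Fintype.card ((Fin τ → Fin m) × (Fin τ → 𝕏))) : ℝ) := by
  set A := Ach (iidLaw q) (blockDist d m) L with hA
  set A' := Ach (iidLaw q) (blockDist d m) L' with hA'
  set K : ℝ := (Nat.clog 2 (Fintype.card ((Fin τ → Fin m) × (Fin τ → 𝕏))) : ℝ) with hK
  have hK0 : 0 ≤ K := Nat.cast_nonneg _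
  have hsub : A' ⊆ A := Ach_mono _ _ hLL
  have hρdiag : ∀ s : Fin m → 𝕏, blockDist d m s s = 0 := fun s => by
    simp [blockDist, hdiag]
  have hperf : ((Fintype.card (Fin m → 𝕏) : ℝ)) ∈ A' := Ach_perfect _ _ hρdiag hL'
  have hA'ne : A'.Nonempty := ⟨_, hperf⟩
  have hAne : A.Nonempty := ⟨_, hsub hperf⟩
  have hmain : ∀ R ∈ A, 0 ≤ R → R + K ∈ A' := fun R hRA hR0 =>
    Ach_mono _ _ hshift (main_step d hdnn hdiag hτm q hq0 hq1 (hL'.trans hLL) hR0 hRA)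
  have hb0 : 0 ≤ sInf A' := Ach_sInf_nonneg _ _ _
  have hbleK : ∀ R : ℝ, 0 ≤ R → R ∈ A → sInf A' ≤ R + K := by
    intro R hR0 hRA
    by_cases hb' : BddBelow A'
    · exact csInf_le hb' (hmain R hRA hR0)
    · rw [Real.sInf_of_not_bddBelow hb']; positivity
  constructor
  · by_cases hbdd : BddBelow A
    · exact csInf_le_csInf hbdd hA'ne hsub
    · rw [Real.sInf_of_not_bddBelow hbdd]; exact hb0
  · by_cases hneg : ∃ R ∈ A, R < 0
    · obtain ⟨R, hR, hRneg⟩ := hneg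
      have h0A : (0:ℝ) ∈ A := Ach_zero_transfer _ _ _ hRneg.le le_rfl hR
      have h1 : sInf A' ≤ K := by simpa using hbleK 0 le_rfl h0A
      have hnb : ¬BddBelow A := by
        rw [not_bddBelow_iff]
        intro x
        exact ⟨min x R - 1, Ach_zero_transfer _ _ _ hRneg.le (by linarith [min_le_right x R]) hR,
          by linarith [min_le_left x R]⟩
      rw [Real.sInf_of_not_bddBelow hnb]
      linarith
    · push_neg at hneg
      have h2 : ∀ R ∈ A, sInf A' - K ≤ R := fun R hRA => by
        linarith [hbleK R (hneg R hRA) hRA]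
      linarith [le_csInf hAne h2]

lemma clog_mul_le (a b : ℕ) : Nat.clog 2 (a * b) ≤ Nat.clog 2 a + Nat.clog 2 b := by
  rw [Nat.clog_le_iff_le_pow one_lt_two, pow_add]
  exact Nat.mul_le_mul (Nat.le_pow_clog one_lt_two a) (Nat.le_pow_clog one_lt_two b)

lemma clog_pow_le (a k : ℕ) : Nat.clog 2 (a ^ k) ≤ k * Nat.clog 2 a := by
  rw [Nat.clog_le_iff_le_pow one_lt_two, mul_comm, pow_mul]
  exact Nat.pow_le_pow_left (Nat.le_pow_clog one_lt_two a) k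

lemma clog_le_log_succ (k : ℕ) : Nat.clog 2 k ≤ Nat.log 2 k + 1 :=
  (Nat.clog_le_iff_le_pow one_lt_two).mpr (Nat.lt_pow_succ_log_self one_lt_two k).le

lemma natlog_le_real (k : ℕ) (hk : 1 ≤ k) : (Nat.log 2 k : ℝ) ≤ Real.log k / Real.log 2 := by
  have h1 : (2:ℝ) ^ (Nat.log 2 k) ≤ (k:ℝ) := by
    exact_mod_cast Nat.pow_log_le_self 2 (by omega)
  have h2 : (0:ℝ) < Real.log 2 := Real.log_pos one_lt_two
  rw [le_div_iff₀ h2]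
  have h3 : (Nat.log 2 k : ℝ) * Real.log 2 = Real.log ((2:ℝ) ^ (Nat.log 2 k)) := by
    rw [Real.log_pow]
  rw [h3]
  refine (Real.log_le_log_iff (by positivity) (by exact_mod_cast hk)).mpr h1

lemma tend_clog (τ X : ℕ) :
    Filter.Tendsto (fun k : ℕ => (Nat.clog 2 (k ^ τ * X ^ τ) : ℝ) / k)
      Filter.atTop (nhds 0) := by
  have hlog : Filter.Tendsto (fun k : ℕ => Real.log k / (k:ℝ)) Filter.atTop (nhds 0) := by
    have h := Real.isLittleO_log_id_atTop.tendsto_div_nhds_zero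
    have h2 := h.comp (tendsto_natCast_atTop_atTop (R := ℝ))
    simpa [Function.comp_def] using h2
  have h1k : Filter.Tendsto (fun k : ℕ => 1 / (k:ℝ)) Filter.atTop (nhds 0) :=
    tendsto_one_div_atTop_nhds_zero_nat
  set C : ℝ := (τ:ℝ) + (τ:ℝ) * (Nat.clog 2 X : ℝ) with hC
  have hχ : Filter.Tendsto
      (fun k : ℕ => ((τ:ℝ) / Real.log 2) * (Real.log k / k) + C * (1/(k:ℝ)))
      Filter.atTop (nhds 0) := by
    have := (hlog.const_mul ((τ:ℝ)/Real.log 2)).add (h1k.const_mul C)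
    simpa using this
  apply squeeze_zero' ?_ ?_ hχ
  · exact Filter.Eventually.of_forall fun k => by positivity
  · filter_upwards [Filter.eventually_ge_atTop 1] with k hk
    have hkR : (0:ℝ) < k := by exact_mod_cast hk
    have hnat : Nat.clog 2 (k ^ τ * X ^ τ) ≤ τ * (Nat.log 2 k + 1) + τ * Nat.clog 2 X := by
      calc Nat.clog 2 (k ^ τ * X ^ τ) ≤ Nat.clog 2 (k ^ τ) + Nat.clog 2 (X ^ τ) :=
            clog_mul_le _ _
        _ ≤ τ * Nat.clog 2 k + τ * Nat.clog 2 X :=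
            add_le_add (clog_pow_le _ _) (clog_pow_le _ _)
        _ ≤ τ * (Nat.log 2 k + 1) + τ * Nat.clog 2 X :=
            add_le_add_left (Nat.mul_le_mul_left τ (clog_le_log_succ k)) _
    have hcast : (Nat.clog 2 (k ^ τ * X ^ τ) : ℝ) ≤
        (τ:ℝ) * ((Nat.log 2 k : ℝ) + 1) + (τ:ℝ) * (Nat.clog 2 X : ℝ) := by
      exact_mod_cast hnat
    have hlg := natlog_le_real k hk
    have hnum : (Nat.clog 2 (k ^ τ * X ^ τ) : ℝ) ≤ (τ:ℝ) * (Real.log k / Real.log 2) + C := by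
      have h4 : (τ:ℝ) * ((Nat.log 2 k : ℝ) + 1) ≤ (τ:ℝ) * (Real.log k / Real.log 2 + 1) :=
        mul_le_mul_of_nonneg_left (by linarith) (Nat.cast_nonneg τ)
      calc (Nat.clog 2 (k ^ τ * X ^ τ) : ℝ)
          ≤ (τ:ℝ) * ((Nat.log 2 k : ℝ) + 1) + (τ:ℝ) * (Nat.clog 2 X : ℝ) := hcast
        _ ≤ (τ:ℝ) * (Real.log k / Real.log 2 + 1) + (τ:ℝ) * (Nat.clog 2 X : ℝ) :=
            add_le_add_left h4 _
        _ = (τ:ℝ) * (Real.log k / Real.log 2) + C := by rw [hC]; ring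
    calc (Nat.clog 2 (k ^ τ * X ^ τ) : ℝ) / k
        ≤ ((τ:ℝ) * (Real.log k / Real.log 2) + C) / k := by gcongr
      _ = ((τ:ℝ) / Real.log 2) * (Real.log k / k) + C * (1/(k:ℝ)) := by ring

/-- **Equation (31).** For every fixed `τ ≥ 1` and `D > 0`,
`lim_{T→∞} | (1/(T−τ)) R^E_{J_τ(X^T_{[π',P]})}(TD) − (1/(T−τ)) R^E_{J_τ(X^T_{[π',P]})}((T−τ)D) | = 0`. -/
theorem proj_rd_level_shift_tendsto_zero
    {𝕏 : Type} [Fintype 𝕏] [DecidableEq 𝕏] (hcard : 2 ≤ Fintype.card 𝕏)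
    (d : 𝕏 → 𝕏 → ℝ) (hdnn : ∀ x y, 0 ≤ d x y)
    (hdiag : ∀ x, d x x = 0) (hdpos : ∀ x y, x ≠ y → 0 < d x y)
    (P : 𝕏 → 𝕏 → ℝ) (hP : IsStochastic P) (hPia : IsIrreducibleAperiodic P)
    (π : 𝕏 → ℝ) (hπ : IsProbDist π) (hπstat : IsStationaryDist P π)
    (π' : 𝕏 → ℝ) (hπ' : IsProbDist π')
    (τ : ℕ) (hτ : 1 ≤ τ) (D : ℝ) (hD : 0 < D) :
    Filter.Tendsto (fun T : ℕ =>
        |((T : ℝ) - (τ : ℝ))⁻¹ * projRDE π' P d T τ ((T : ℝ) * D) -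
          ((T : ℝ) - (τ : ℝ))⁻¹ * projRDE π' P d T τ (((T : ℝ) - (τ : ℝ)) * D)|)
      Filter.atTop (nhds 0) := by
  have hXne : Nonempty 𝕏 := Fintype.card_pos_iff.mp (by omega)
  refine squeeze_zero'
    (g := fun T : ℕ =>
      (Nat.clog 2 ((T - τ) ^ τ * (Fintype.card 𝕏) ^ τ) : ℝ) / ((T : ℝ) - (τ : ℝ)))
    (Filter.Eventually.of_forall fun T => abs_nonneg _) ?_ ?_
  · filter_upwards [Filter.eventually_ge_atTop (2 * τ + 1)] with T hT
    have hτT : τ ≤ T := by omega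
    have hτm : τ < T - τ := by omega
    have hcast : ((T - τ : ℕ) : ℝ) = (T : ℝ) - (τ : ℝ) := by
      rw [Nat.cast_sub hτT]
    have hcpos : (0 : ℝ) < (T : ℝ) - (τ : ℝ) := by
      rw [← hcast]
      exact_mod_cast Nat.sub_pos_of_lt (by omega)
    set q := projDist (markovLaw π' P T) τ with hq
    have hq0 : ∀ s, 0 ≤ q s := fun s =>
      projDist_nonneg _ (markovLaw_nonneg π' P hπ'.1 hP.1 T) τ s
    have hq1 : ∑ s, q s = 1 := by
      rw [hq, sum_projDist, sum_markovLaw π' P hπ'.2 hP.2 T]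
    have hL' : 0 ≤ ((T : ℝ) - (τ : ℝ)) * D := mul_nonneg hcpos.le hD.le
    have hLL : ((T : ℝ) - (τ : ℝ)) * D ≤ (T : ℝ) * D := by
      have : (0:ℝ) ≤ (τ : ℝ) := Nat.cast_nonneg τ
      nlinarith
    have hshift : (1 - (τ : ℝ) / ((T - τ : ℕ) : ℝ)) * ((T : ℝ) * D) ≤
        ((T : ℝ) - (τ : ℝ)) * D := by
      rw [hcast]
      have h4 : (1 - (τ : ℝ) / ((T : ℝ) - τ)) * (T : ℝ) ≤ (T : ℝ) - τ := by
        rw [sub_mul, one_mul, div_mul_eq_mul_div, sub_le_sub_iff_left, le_div_iff₀ hcpos]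
        have : (0:ℝ) ≤ (τ : ℝ) * (τ : ℝ) := mul_self_nonneg _
        nlinarith
      calc (1 - (τ : ℝ) / ((T : ℝ) - τ)) * ((T : ℝ) * D)
          = ((1 - (τ : ℝ) / ((T : ℝ) - τ)) * (T : ℝ)) * D := by ring
        _ ≤ ((T : ℝ) - (τ : ℝ)) * D := mul_le_mul_of_nonneg_right h4 hD.le
    have hsand := sandwich d hdnn hdiag hτm q hq0 hq1 hL' hLL hshift
    have ha : projRDE π' P d T τ ((T : ℝ) * D)
        = sInf (Ach (iidLaw q) (blockDist d (T - τ)) ((T : ℝ) * D)) := rfl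
    have hb : projRDE π' P d T τ (((T : ℝ) - (τ : ℝ)) * D)
        = sInf (Ach (iidLaw q) (blockDist d (T - τ)) (((T : ℝ) - (τ : ℝ)) * D)) := rfl
    rw [ha, hb]
    set u := sInf (Ach (iidLaw q) (blockDist d (T - τ)) ((T : ℝ) * D)) with hu
    set v := sInf (Ach (iidLaw q) (blockDist d (T - τ)) (((T : ℝ) - (τ : ℝ)) * D)) with hv
    obtain ⟨h1, h2⟩ := hsand
    have hKcard : Fintype.card ((Fin τ → Fin (T - τ)) × (Fin τ → 𝕏))
        = (T - τ) ^ τ * (Fintype.card 𝕏) ^ τ := by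
      rw [Fintype.card_prod, Fintype.card_fun, Fintype.card_fun, Fintype.card_fin,
        Fintype.card_fin]
    rw [hKcard] at h2
    have habs : |((T : ℝ) - (τ : ℝ))⁻¹ * u - ((T : ℝ) - (τ : ℝ))⁻¹ * v|
        = ((T : ℝ) - (τ : ℝ))⁻¹ * (v - u) := by
      rw [abs_of_nonpos]
      · ring
      · have := mul_le_mul_of_nonneg_left h1 (inv_nonneg.mpr hcpos.le)
        linarith
    rw [habs]
    calc ((T : ℝ) - (τ : ℝ))⁻¹ * (v - u)
        ≤ ((T : ℝ) - (τ : ℝ))⁻¹ * (Nat.clog 2 ((T - τ) ^ τ * (Fintype.card 𝕏) ^ τ) : ℝ) :=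
          mul_le_mul_of_nonneg_left (by linarith) (inv_nonneg.mpr hcpos.le)
      _ = (Nat.clog 2 ((T - τ) ^ τ * (Fintype.card 𝕏) ^ τ) : ℝ) / ((T : ℝ) - (τ : ℝ)) := by
          rw [inv_mul_eq_div]
  · have h := (tend_clog τ (Fintype.card 𝕏)).comp (tendsto_sub_atTop_nat τ)
    apply h.congr'
    filter_upwards [Filter.eventually_ge_atTop (τ + 1)] with T hT
    have hcast : ((T - τ : ℕ) : ℝ) = (T : ℝ) - (τ : ℝ) := Nat.cast_sub (by omega)
    simp [Function.comp, hcast]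
end
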